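/- arXiv:1601.00090 — 8 statements merged into one kernel-verified Lean document; each statement's English description precedes it below -/
import Mathlib

section
/- Let λ₁, λ₂ ∈ ℂ with λ₁ ∉ ℝ and λ₂ ∉ ℝ. Then there exists a homeomorphism Φ of the closed unit ball B = {z ∈ ℂ² : |z| ≤ 1} onto itself with Φ(0) = 0 such that for all p = (p₁,p₂) and q = (q₁,q₂) in B \ {0}: (∃ t ∈ ℂ, q₁ = p₁·exp(λ₁·t) ∧ q₂ = p₂·exp(t)) if and only if (∃ s ∈ ℂ, (Φ q)₁ = (Φ p)₁·exp(λ₂·s) ∧ (Φ q)₂ = (Φ p)₂·exp(s)). In other words, Φ maps the trace in B of each leaf of the holomorphic foliation given by λ₁x ∂/∂x + y ∂/∂y onto the trace in B of a leaf of the foliation given by λ₂x ∂/∂x + y ∂/∂y, so the two foliation germs are topologically equivalent. -/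
open Complex

noncomputable section

namespace Complex

/-- compatibility: the complex absolute value as an `AbsoluteValue`. -/
def abs : AbsoluteValue ℂ ℝ where
  toFun z := ‖z‖
  map_mul' := norm_mul
  nonneg' := norm_nonneg
  eq_zero' _ := norm_eq_zero
  add_le' := norm_add_le

lemma abs_apply' (z : ℂ) : abs z = ‖z‖ := rfl
lemma norm_eq_abs (z : ℂ) : ‖z‖ = abs z := rfl
lemma abs_exp (z : ℂ) : abs (exp z) = Real.exp z.re := norm_exp z
lemma abs_conj (z : ℂ) : abs ((starRingEnd ℂ) z) = abs z := norm_conj z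
lemma continuous_abs : Continuous abs := continuous_norm

end Complex

/-- Bundled data for the topological equivalence construction between the
linear foliations with ratios `l₁` and `l₂`. -/
structure FData (l₁ l₂ : ℂ) where
  J : ℂ →+* ℂ
  A : ℂ
  B : ℂ
  Jexp : ∀ z, J (Complex.exp z) = Complex.exp (J z)
  Jabs : ∀ z, Complex.abs (J z) = Complex.abs z
  Jre : ∀ z, (J z).re = z.re
  Jinv : ∀ z, J (J z) = z
  Jreal : ∀ r : ℝ, J (r : ℂ) = (r : ℂ)
  Jcont : Continuous J
  hA : 0 < A.re
  hB : 0 < B.re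
  star : ∀ t : ℂ, J (l₁ * t) + (A - 1) * ((l₁ * t).re : ℂ)
      = l₂ * (J t + (B - 1) * (t.re : ℂ))

theorem fdata_exists (l₁ l₂ : ℂ) (h₁ : l₁.im ≠ 0) (h₂ : l₂.im ≠ 0) :
    Nonempty (FData l₁ l₂) := by
  have hl₂ : l₂ ≠ 0 := fun h => h₂ (by simp [h])
  have hb₁ : (l₁.im : ℂ) ≠ 0 := by exact_mod_cast h₁
  have hsql₂ : l₂.re * l₂.re + l₂.im * l₂.im ≠ 0 := by
    simpa [Complex.normSq_apply] using (Complex.normSq_pos.mpr hl₂).ne'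
  rcases lt_or_gt_of_ne (mul_ne_zero h₁ h₂) with hneg | hpos
  · -- J = conjugation
    set A : ℂ := 1 + I * (l₂ - (starRingEnd ℂ) l₁) / (l₁.im : ℂ) with hAdef
    set w : ℂ := (starRingEnd ℂ) l₁ + (A - 1) * (l₁.re : ℂ) with hwdef
    set B : ℂ := w / l₂ with hBdef
    have hAspec : (l₁.im : ℂ) * (A - 1) = I * (l₂ - (starRingEnd ℂ) l₁) := by
      rw [hAdef]; field_simp; ring
    have hBspec : l₂ * B = (starRingEnd ℂ) l₁ + (A - 1) * (l₁.re : ℂ) := by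
      rw [hBdef, hwdef]; field_simp
    have hAre : A.re = -(l₂.im / l₁.im) := by
      rw [hAdef]
      simp [Complex.div_re, Complex.mul_re, Complex.mul_im, Complex.normSq_apply,
        Complex.add_re]
      field_simp
      ring
    have hwre : w.re = -(l₁.re * l₂.im) / l₁.im := by
      rw [hwdef, hAdef]
      simp [Complex.div_re, Complex.div_im, Complex.mul_re, Complex.mul_im, Complex.normSq_apply,
        Complex.add_re, Complex.add_im, Complex.sub_re, Complex.sub_im]
      field_simp
      ring
    have hwim : w.im = (l₁.re * l₂.re - l₁.re ^ 2 - l₁.im ^ 2) / l₁.im := by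
      rw [hwdef, hAdef]
      simp [Complex.div_re, Complex.div_im, Complex.mul_re, Complex.mul_im, Complex.normSq_apply,
        Complex.add_re, Complex.add_im, Complex.sub_re, Complex.sub_im]
      field_simp
      ring
    have hBre : B.re = -(l₂.im * (l₁.re ^ 2 + l₁.im ^ 2)) / (l₁.im * (l₂.re ^ 2 + l₂.im ^ 2)) := by
      rw [hBdef, Complex.div_re, hwre, hwim, Complex.normSq_apply]
      field_simp
      ring
    refine ⟨⟨starRingEnd ℂ, A, B, fun z => (Complex.exp_conj z).symm, Complex.abs_conj,
      Complex.conj_re, fun z => Complex.conj_conj z, Complex.conj_ofReal,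
      Complex.continuous_conj, ?_, ?_, ?_⟩⟩
    · rw [hAre]
      have : -(l₂.im / l₁.im) = -(l₁.im * l₂.im) / (l₁.im ^ 2) := by field_simp
      rw [this]
      exact div_pos (by linarith) (by positivity)
    · rw [hBre]
      have hr : -(l₂.im * (l₁.re ^ 2 + l₁.im ^ 2)) / (l₁.im * (l₂.re ^ 2 + l₂.im ^ 2))
          = (-(l₁.im * l₂.im) * (l₁.re ^ 2 + l₁.im ^ 2)) / ((l₁.im ^ 2) * (l₂.re ^ 2 + l₂.im ^ 2)) := by
        have hsq2 : l₂.re ^ 2 + l₂.im ^ 2 ≠ 0 := by positivity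
        field_simp
      rw [hr]
      have h1sq : (0:ℝ) < l₁.re ^ 2 + l₁.im ^ 2 := by positivity
      have h2sq : (0:ℝ) < l₂.re ^ 2 + l₂.im ^ 2 := by positivity
      exact div_pos (mul_pos (by linarith) h1sq) (mul_pos (by positivity) h2sq)
    · intro t
      have hc : (((l₁ * t).re : ℝ) : ℂ) = (l₁.re : ℂ) * (t.re : ℂ) - (l₁.im : ℂ) * (t.im : ℂ) := by
        rw [Complex.mul_re]; push_cast; ring
      have hconjt : (starRingEnd ℂ) t = (t.re : ℂ) - (t.im : ℂ) * I := by
        apply Complex.ext <;> simp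
      rw [map_mul, hc]
      linear_combination ((starRingEnd ℂ) l₁ - l₂) * hconjt - (t.re : ℂ) * hBspec
        - (t.im : ℂ) * hAspec
  · -- J = identity
    set A : ℂ := 1 + I * (l₁ - l₂) / (l₁.im : ℂ) with hAdef
    set w : ℂ := l₁ + (A - 1) * (l₁.re : ℂ) with hwdef
    set B : ℂ := w / l₂ with hBdef
    have hAspec : (l₁.im : ℂ) * (A - 1) = I * (l₁ - l₂) := by
      rw [hAdef]; field_simp; ring
    have hBspec : l₂ * B = l₁ + (A - 1) * (l₁.re : ℂ) := by
      rw [hBdef, hwdef]; field_simp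
    have hAre : A.re = l₂.im / l₁.im := by
      rw [hAdef]
      simp [Complex.div_re, Complex.mul_re, Complex.mul_im, Complex.normSq_apply,
        Complex.add_re]
      field_simp
      ring
    have hwre : w.re = l₁.re * l₂.im / l₁.im := by
      rw [hwdef, hAdef]
      simp [Complex.div_re, Complex.div_im, Complex.mul_re, Complex.mul_im, Complex.normSq_apply,
        Complex.add_re, Complex.add_im, Complex.sub_re, Complex.sub_im]
      field_simp
      ring
    have hwim : w.im = (l₁.re ^ 2 + l₁.im ^ 2 - l₁.re * l₂.re) / l₁.im := by
      rw [hwdef, hAdef]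
      simp [Complex.div_re, Complex.div_im, Complex.mul_re, Complex.mul_im, Complex.normSq_apply,
        Complex.add_re, Complex.add_im, Complex.sub_re, Complex.sub_im]
      field_simp
      ring
    have hBre : B.re = (l₂.im * (l₁.re ^ 2 + l₁.im ^ 2)) / (l₁.im * (l₂.re ^ 2 + l₂.im ^ 2)) := by
      rw [hBdef, Complex.div_re, hwre, hwim, Complex.normSq_apply]
      field_simp
      ring
    refine ⟨⟨RingHom.id ℂ, A, B, fun z => rfl, fun z => rfl, fun z => rfl, fun z => rfl,
      fun r => rfl, continuous_id, ?_, ?_, ?_⟩⟩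
    · rw [hAre]
      have : l₂.im / l₁.im = (l₁.im * l₂.im) / (l₁.im ^ 2) := by field_simp
      rw [this]
      exact div_pos (by linarith) (by positivity)
    · rw [hBre]
      have hr : (l₂.im * (l₁.re ^ 2 + l₁.im ^ 2)) / (l₁.im * (l₂.re ^ 2 + l₂.im ^ 2))
          = ((l₁.im * l₂.im) * (l₁.re ^ 2 + l₁.im ^ 2)) / ((l₁.im ^ 2) * (l₂.re ^ 2 + l₂.im ^ 2)) := by
        have hsq2 : l₂.re ^ 2 + l₂.im ^ 2 ≠ 0 := by positivity
        field_simp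
      rw [hr]
      have h1sq : (0:ℝ) < l₁.re ^ 2 + l₁.im ^ 2 := by positivity
      have h2sq : (0:ℝ) < l₂.re ^ 2 + l₂.im ^ 2 := by positivity
      exact div_pos (mul_pos (by linarith) h1sq) (mul_pos (by positivity) h2sq)
    · intro t
      have hc : (((l₁ * t).re : ℝ) : ℂ) = (l₁.re : ℂ) * (t.re : ℂ) - (l₁.im : ℂ) * (t.im : ℂ) := by
        rw [Complex.mul_re]; push_cast; ring
      have ht : t = (t.re : ℂ) + (t.im : ℂ) * I := (Complex.re_add_im t).symm
      rw [hc]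
      simp only [RingHom.id_apply]
      linear_combination (l₁ - l₂) * ht - (t.re : ℂ) * hBspec - (t.im : ℂ) * hAspec
open Complex

noncomputable section

/-- The basic one-variable building block: `x ↦ J x · |x|^(A-1)`. -/
def phiF (J : ℂ →+* ℂ) (A : ℂ) (x : ℂ) : ℂ :=
  J x * Complex.exp ((A - 1) * (Real.log (Complex.abs x) : ℂ))

section phiFlemmas

variable (J : ℂ →+* ℂ) (A : ℂ)

lemma phiF_zero : phiF J A 0 = 0 := by simp [phiF]

lemma abs_phiF (hJabs : ∀ z, Complex.abs (J z) = Complex.abs z) (hA : 0 < A.re) (x : ℂ) :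
    Complex.abs (phiF J A x) = (Complex.abs x) ^ A.re := by
  by_cases hx : x = 0
  · simp [phiF, hx, Real.zero_rpow hA.ne']
  · have hax : 0 < Complex.abs x := Complex.abs.pos hx
    have h1 : ((A - 1) * (Real.log (Complex.abs x) : ℂ)).re = (A.re - 1) * Real.log (Complex.abs x) := by
      simp [Complex.mul_re]
    rw [phiF, map_mul, hJabs, Complex.abs_exp, h1, Real.rpow_def_of_pos hax]
    rw [show Real.log (Complex.abs x) * A.re
        = Real.log (Complex.abs x) + (A.re - 1) * Real.log (Complex.abs x) by ring,
      Real.exp_add, Real.exp_log hax]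

lemma phiF_ne_zero (hJabs : ∀ z, Complex.abs (J z) = Complex.abs z) (hA : 0 < A.re)
    {x : ℂ} (hx : x ≠ 0) : phiF J A x ≠ 0 := by
  intro h
  have := abs_phiF J A hJabs hA x
  rw [h] at this
  simp only [map_zero] at this
  exact absurd this.symm (ne_of_gt (Real.rpow_pos_of_pos (Complex.abs.pos hx) _))

lemma phiF_hom (hJexp : ∀ z, J (Complex.exp z) = Complex.exp (J z)) (x w : ℂ) :
    phiF J A (x * Complex.exp w) = phiF J A x * Complex.exp (J w + (A - 1) * (w.re : ℂ)) := by
  by_cases hx : x = 0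
  · simp [phiF, hx]
  · have hax : Complex.abs x ≠ 0 := Complex.abs.ne_zero hx
    have habs : Complex.abs (x * Complex.exp w) = Complex.abs x * Real.exp w.re := by
      rw [map_mul, Complex.abs_exp]
    have hlog : Real.log (Complex.abs (x * Complex.exp w)) = Real.log (Complex.abs x) + w.re := by
      rw [habs, Real.log_mul hax (Real.exp_ne_zero _), Real.log_exp]
    rw [phiF, phiF, map_mul, hJexp, hlog, mul_assoc, mul_assoc, ← Complex.exp_add, ← Complex.exp_add]
    congr 1
    push_cast
    ring

lemma phiF_comp (A' : ℂ)
    (hJabs : ∀ z, Complex.abs (J z) = Complex.abs z)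
    (hJexp : ∀ z, J (Complex.exp z) = Complex.exp (J z))
    (hJinv : ∀ z, J (J z) = z)
    (hJreal : ∀ r : ℝ, J (r : ℂ) = (r : ℂ))
    (hA' : 0 < A'.re)
    (hid : J (A' - 1) + (A - 1) * (A'.re : ℂ) = 0) (u : ℂ) :
    phiF J A (phiF J A' u) = u := by
  by_cases hu : u = 0
  · simp [phiF, hu]
  · have hau : 0 < Complex.abs u := Complex.abs.pos hu
    have hlog : Real.log (Complex.abs (phiF J A' u)) = A'.re * Real.log (Complex.abs u) := by
      rw [abs_phiF J A' hJabs hA' u, Real.log_rpow hau]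
    have hJpart : J (phiF J A' u) = u * Complex.exp (J (A' - 1) * (Real.log (Complex.abs u) : ℂ)) := by
      rw [phiF, map_mul, hJinv, hJexp]
      congr 2
      rw [map_mul, hJreal]
    rw [phiF, hJpart, hlog, mul_assoc, ← Complex.exp_add]
    have : J (A' - 1) * (Real.log (Complex.abs u) : ℂ)
        + (A - 1) * ((A'.re * Real.log (Complex.abs u) : ℝ) : ℂ)
        = (J (A' - 1) + (A - 1) * (A'.re : ℂ)) * (Real.log (Complex.abs u) : ℂ) := by
      push_cast; ring
    rw [this, hid, zero_mul, Complex.exp_zero, mul_one]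

lemma continuous_phiF (hJabs : ∀ z, Complex.abs (J z) = Complex.abs z)
    (hJcont : Continuous J) (hA : 0 < A.re) : Continuous (phiF J A) := by
  rw [continuous_iff_continuousAt]
  intro x₀
  by_cases hx : x₀ = 0
  · subst hx
    have h0 : phiF J A 0 = 0 := phiF_zero J A
    unfold ContinuousAt
    rw [h0]
    have hb : ∀ x : ℂ, ‖phiF J A x‖ ≤ (Complex.abs x) ^ A.re := fun x =>
      le_of_eq (by rw [Complex.norm_eq_abs, abs_phiF J A hJabs hA x])
    have hg' : Filter.Tendsto (fun x : ℂ => (Complex.abs x) ^ A.re) (nhds 0) (nhds 0) := by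
      have hab : Filter.Tendsto (fun x : ℂ => Complex.abs x) (nhds 0) (nhds 0) := by
        simpa using Complex.continuous_abs.tendsto 0
      have hrp : Filter.Tendsto (fun r : ℝ => r ^ A.re) (nhds 0) (nhds 0) := by
        simpa [Real.zero_rpow hA.ne'] using
          (Real.continuousAt_rpow_const 0 A.re (Or.inr hA.le)).tendsto
      exact hrp.comp hab
    exact squeeze_zero_norm hb hg'
  · have hax : Complex.abs x₀ ≠ 0 := Complex.abs.ne_zero hx
    apply ContinuousAt.mul (hJcont.continuousAt)
    apply (Complex.continuous_exp.continuousAt).comp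
    apply ContinuousAt.mul continuousAt_const
    apply (Complex.continuous_ofReal.continuousAt).comp
    exact (Real.continuousAt_log hax).comp (Complex.continuous_abs.continuousAt)

end phiFlemmas

/-! ### The main construction -/

abbrev E2 := EuclideanSpace ℂ (Fin 2)

def mkE (a b : ℂ) : E2 := (WithLp.equiv 2 (Fin 2 → ℂ)).symm ![a, b]

lemma mkE_fst (a b : ℂ) : mkE a b 0 = a := rfl
lemma mkE_snd (a b : ℂ) : mkE a b 1 = b := rfl

lemma norm_mkE (a b : ℂ) : ‖mkE a b‖ = Real.sqrt (Complex.abs a ^ 2 + Complex.abs b ^ 2) := by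
  rw [EuclideanSpace.norm_eq]
  congr 1
  rw [Fin.sum_univ_two]
  simp [mkE, Complex.norm_eq_abs]

lemma mkE_self (z : E2) : mkE (z 0) (z 1) = z := by
  refine PiLp.ext fun i => ?_
  fin_cases i <;> rfl

lemma norm_E2 (z : E2) : ‖z‖ = Real.sqrt (Complex.abs (z 0) ^ 2 + Complex.abs (z 1) ^ 2) := by
  conv_lhs => rw [← mkE_self z]
  exact norm_mkE _ _

lemma E2_ne_zero {z : E2} (hz : z ≠ 0) : z 0 ≠ 0 ∨ z 1 ≠ 0 := by
  by_contra h
  push_neg at h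
  refine hz (PiLp.ext fun i => ?_)
  fin_cases i <;> first | simpa using h.1 | simpa using h.2

/-- The constant used in the leafwise radial normalization. -/
def c2v (l₂ : ℂ) : ℂ := ⟨1, (l₂.re - 1) / l₂.im⟩

lemma c2v_re (l₂ : ℂ) : (c2v l₂).re = 1 := rfl

lemma l2c2_re {l₂ : ℂ} (h₂ : l₂.im ≠ 0) : (l₂ * c2v l₂).re = 1 := by
  simp only [Complex.mul_re, c2v]
  field_simp
  ring

lemma abs_mul_exp (c w : ℂ) (hw : w.re = 1) (r : ℝ) :
    Complex.abs (c * Complex.exp (w * (r : ℂ))) = Complex.abs c * Real.exp r := by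
  rw [map_mul, Complex.abs_exp, Complex.re_mul_ofReal, hw, one_mul]

/-- `(exp x) ^ c = exp (x * c)` for rpow. -/
lemma exp_rpow' (x c : ℝ) : (Real.exp x) ^ c = Real.exp (x * c) := by
  rw [Real.rpow_def_of_pos (Real.exp_pos x), Real.log_exp]

section Main

variable {l₁ l₂ : ℂ}

def Xc (d : FData l₁ l₂) (z : E2) : ℂ := phiF d.J d.A (z 0)
def Yc (d : FData l₁ l₂) (z : E2) : ℂ := phiF d.J d.B (z 1)
def Sf (d : FData l₁ l₂) (z : E2) : ℝ :=
  Real.sqrt (Complex.abs (Xc d z) ^ 2 + Complex.abs (Yc d z) ^ 2)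
def Lf (d : FData l₁ l₂) (z : E2) : ℝ := Real.log ‖z‖ - Real.log (Sf d z)

open Classical in
/-- The candidate homeomorphism of `ℂ²`. -/
def Phim (d : FData l₁ l₂) (z : E2) : E2 :=
  if z = 0 then 0 else
    mkE (Xc d z * Complex.exp (l₂ * c2v l₂ * (Lf d z : ℂ)))
        (Yc d z * Complex.exp (c2v l₂ * (Lf d z : ℂ)))

lemma Sf_pos (d : FData l₁ l₂) {z : E2} (hz : z ≠ 0) : 0 < Sf d z := by
  rw [Sf, Real.sqrt_pos]
  rcases E2_ne_zero hz with h | h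
  · have : 0 < Complex.abs (Xc d z) := Complex.abs.pos (phiF_ne_zero d.J d.A d.Jabs d.hA h)
    positivity
  · have : 0 < Complex.abs (Yc d z) := Complex.abs.pos (phiF_ne_zero d.J d.B d.Jabs d.hB h)
    positivity

lemma norm_Phim (d : FData l₁ l₂) (h₂ : l₂.im ≠ 0) (z : E2) : ‖Phim d z‖ = ‖z‖ := by
  by_cases hz : z = 0
  · simp [Phim, hz]
  · have hS := Sf_pos d hz
    have hN : (0:ℝ) < ‖z‖ := norm_pos_iff.mpr hz
    rw [Phim, if_neg hz, norm_mkE, abs_mul_exp _ _ (l2c2_re h₂), abs_mul_exp _ _ (c2v_re l₂)]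
    have hexp : Real.exp (Lf d z) = ‖z‖ / Sf d z := by
      rw [Lf, Real.exp_sub, Real.exp_log hN, Real.exp_log hS]
    have : (Complex.abs (Xc d z) * Real.exp (Lf d z)) ^ 2
        + (Complex.abs (Yc d z) * Real.exp (Lf d z)) ^ 2
        = (Complex.abs (Xc d z) ^ 2 + Complex.abs (Yc d z) ^ 2) * (Real.exp (Lf d z)) ^ 2 := by
      ring
    rw [this, Real.sqrt_mul (by positivity), Real.sqrt_sq (Real.exp_pos _).le, ← Sf, hexp]
    field_simp

lemma continuous_Phim (d : FData l₁ l₂) (h₂ : l₂.im ≠ 0) : Continuous (Phim d) := by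
  rw [continuous_iff_continuousAt]
  intro z₀
  by_cases hz : z₀ = 0
  · subst hz
    unfold ContinuousAt
    have h0 : Phim d 0 = 0 := by simp [Phim]
    rw [h0]
    have hb : ∀ z : E2, ‖Phim d z‖ ≤ ‖z‖ := fun z => le_of_eq (norm_Phim d h₂ z)
    exact squeeze_zero_norm hb (by simpa using continuous_norm.tendsto (0 : E2))
  · have hSpos := Sf_pos d hz
    have hN : (0:ℝ) < ‖z₀‖ := norm_pos_iff.mpr hz
    have hXc : Continuous (Xc d) :=
      (continuous_phiF d.J d.A d.Jabs d.Jcont d.hA).comp (PiLp.continuous_apply 2 _ 0)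
    have hYc : Continuous (Yc d) :=
      (continuous_phiF d.J d.B d.Jabs d.Jcont d.hB).comp (PiLp.continuous_apply 2 _ 1)
    have hSf : Continuous (Sf d) := by
      apply Real.continuous_sqrt.comp
      exact ((Complex.continuous_abs.comp hXc).pow 2).add ((Complex.continuous_abs.comp hYc).pow 2)
    have hLf : ContinuousAt (Lf d) z₀ := by
      apply ContinuousAt.sub
      · exact (Real.continuousAt_log hN.ne').comp continuous_norm.continuousAt
      · exact (Real.continuousAt_log hSpos.ne').comp hSf.continuousAt
    have hmain : ContinuousAt (fun z => mkE (Xc d z * Complex.exp (l₂ * c2v l₂ * (Lf d z : ℂ)))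
        (Yc d z * Complex.exp (c2v l₂ * (Lf d z : ℂ)))) z₀ := by
      have hcast : ContinuousAt (fun z : E2 => ((Lf d z : ℝ) : ℂ)) z₀ :=
        Complex.continuous_ofReal.continuousAt.comp hLf
      have h1 : ContinuousAt (fun z => Xc d z * Complex.exp (l₂ * c2v l₂ * (Lf d z : ℂ))) z₀ :=
        (hXc.continuousAt).mul (Complex.continuous_exp.continuousAt.comp
          (continuousAt_const.mul hcast))
      have h2 : ContinuousAt (fun z => Yc d z * Complex.exp (c2v l₂ * (Lf d z : ℂ))) z₀ :=
        (hYc.continuousAt).mul (Complex.continuous_exp.continuousAt.comp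
          (continuousAt_const.mul hcast))
      unfold mkE
      apply ContinuousAt.comp (PiLp.continuous_toLp 2 (fun _ : Fin 2 => ℂ)).continuousAt
      apply continuousAt_pi.mpr
      intro i
      fin_cases i
      · exact h1
      · exact h2
    apply hmain.congr
    have hopen : IsOpen {z : E2 | z ≠ 0} := isOpen_ne
    filter_upwards [hopen.mem_nhds hz] with w hw
    rw [Phim, if_neg hw]

/-! ### Inverse data -/

def Adag (J : ℂ →+* ℂ) (A : ℂ) : ℂ := 1 - J (A - 1) * ((A.re⁻¹ : ℝ) : ℂ)

lemma Adag_re (J : ℂ →+* ℂ) (A : ℂ) (hJre : ∀ z, (J z).re = z.re) (hA : 0 < A.re) :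
    (Adag J A).re = A.re⁻¹ := by
  rw [Adag, Complex.sub_re, Complex.re_mul_ofReal, hJre, Complex.sub_re, Complex.one_re]
  field_simp
  ring

lemma Adag_pos (J : ℂ →+* ℂ) (A : ℂ) (hJre : ∀ z, (J z).re = z.re) (hA : 0 < A.re) :
    0 < (Adag J A).re := by
  rw [Adag_re J A hJre hA]; positivity

lemma dag_right (J : ℂ →+* ℂ) (A : ℂ) (hA : 0 < A.re) :
    J (A - 1) + (Adag J A - 1) * ((A.re : ℝ) : ℂ) = 0 := by
  rw [Adag]
  have : ((A.re⁻¹ : ℝ) : ℂ) * ((A.re : ℝ) : ℂ) = 1 := by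
    rw [← Complex.ofReal_mul, inv_mul_cancel₀ hA.ne']
    simp
  calc J (A - 1) + (1 - J (A - 1) * ((A.re⁻¹ : ℝ) : ℂ) - 1) * ((A.re : ℝ) : ℂ)
      = J (A - 1) - J (A - 1) * (((A.re⁻¹ : ℝ) : ℂ) * ((A.re : ℝ) : ℂ)) := by ring
    _ = 0 := by rw [this]; ring

lemma dag_left (J : ℂ →+* ℂ) (A : ℂ)
    (hJre : ∀ z, (J z).re = z.re) (hJinv : ∀ z, J (J z) = z)
    (hJreal : ∀ r : ℝ, J (r : ℂ) = (r : ℂ)) (hA : 0 < A.re) :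
    J (Adag J A - 1) + (A - 1) * (((Adag J A).re : ℝ) : ℂ) = 0 := by
  have h1 : J (Adag J A - 1) = -((A - 1) * ((A.re⁻¹ : ℝ) : ℂ)) := by
    rw [Adag]
    rw [show (1 : ℂ) - J (A - 1) * ((A.re⁻¹ : ℝ) : ℂ) - 1 = -(J (A - 1) * ((A.re⁻¹ : ℝ) : ℂ)) by ring]
    rw [map_neg, map_mul, hJinv, hJreal]
  rw [h1, Adag_re J A hJre hA]
  ring

/-- `phiF J A` is injective. -/
lemma phiF_injective (J : ℂ →+* ℂ) (A : ℂ)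
    (hJabs : ∀ z, Complex.abs (J z) = Complex.abs z)
    (hJexp : ∀ z, J (Complex.exp z) = Complex.exp (J z))
    (hJre : ∀ z, (J z).re = z.re) (hJinv : ∀ z, J (J z) = z)
    (hJreal : ∀ r : ℝ, J (r : ℂ) = (r : ℂ)) (hA : 0 < A.re) :
    Function.Injective (phiF J A) := by
  have hleft : ∀ x, phiF J (Adag J A) (phiF J A x) = x := fun x =>
    phiF_comp J (Adag J A) A hJabs hJexp hJinv hJreal hA (dag_right J A hA) x
  exact Function.LeftInverse.injective hleft

/-- Auxiliary strict monotonicity. -/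
lemma strict_aux (c1 c2 a1 a2 : ℝ) (h1 : 0 ≤ c1) (h2 : 0 ≤ c2) (h : 0 < c1 ∨ 0 < c2)
    (ha1 : 0 < a1) (ha2 : 0 < a2) :
    StrictMono (fun s => c1 * Real.exp (a1 * s) + c2 * Real.exp (a2 * s)) := by
  intro x y hxy
  rcases h with hc | hc
  · apply add_lt_add_of_lt_of_le
    · exact mul_lt_mul_of_pos_left (Real.exp_lt_exp.mpr (by nlinarith)) hc
    · exact mul_le_mul_of_nonneg_left (Real.exp_le_exp.mpr (by nlinarith)) h2
  · apply add_lt_add_of_le_of_lt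
    · exact mul_le_mul_of_nonneg_left (Real.exp_le_exp.mpr (by nlinarith)) h1
    · exact mul_lt_mul_of_pos_left (Real.exp_lt_exp.mpr (by nlinarith)) hc

/-- cancel an exponential factor -/
lemma exp_cancel {x y u v : ℂ} (h : x * Complex.exp u = y * Complex.exp v) :
    x = y * Complex.exp (v - u) := by
  have := congrArg (fun w => w * Complex.exp (-u)) h
  simpa [mul_assoc, ← Complex.exp_add, add_neg_cancel, sub_eq_add_neg] using this

lemma exp_cancel_real {a b : ℝ} {x y : ℝ} (h : a * Real.exp x = b * Real.exp y) :
    b = a * Real.exp (x - y) := by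
  have hy := Real.exp_ne_zero y
  rw [Real.exp_sub]
  field_simp
  linarith

lemma abs_Xc (d : FData l₁ l₂) (z : E2) :
    Complex.abs (Xc d z) = (Complex.abs (z 0)) ^ d.A.re := abs_phiF d.J d.A d.Jabs d.hA _

lemma abs_Yc (d : FData l₁ l₂) (z : E2) :
    Complex.abs (Yc d z) = (Complex.abs (z 1)) ^ d.B.re := abs_phiF d.J d.B d.Jabs d.hB _

lemma Phim_inj (d : FData l₁ l₂) (h₂ : l₂.im ≠ 0) : Function.Injective (Phim d) := by
  intro z z' h
  have hnorm : ‖z‖ = ‖z'‖ := by rw [← norm_Phim d h₂ z, ← norm_Phim d h₂ z', h]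
  by_cases hz : z = 0
  · subst hz
    have : ‖z'‖ = 0 := by simpa using hnorm.symm
    exact (norm_eq_zero.mp this).symm
  · have hz' : z' ≠ 0 := by
      intro hc
      rw [hc, norm_zero, norm_eq_zero] at hnorm
      exact hz hnorm
    simp only [Phim] at h
    rw [if_neg hz, if_neg hz'] at h
    have h0 : Xc d z * Complex.exp (l₂ * c2v l₂ * (Lf d z : ℂ))
        = Xc d z' * Complex.exp (l₂ * c2v l₂ * (Lf d z' : ℂ)) := by
      have := congrArg (fun w : E2 => w 0) h; simpa [mkE_fst] using this
    have h1 : Yc d z * Complex.exp (c2v l₂ * (Lf d z : ℂ))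
        = Yc d z' * Complex.exp (c2v l₂ * (Lf d z' : ℂ)) := by
      have := congrArg (fun w : E2 => w 1) h; simpa [mkE_snd] using this
    -- take absolute values
    have ha0 : Complex.abs (Xc d z) * Real.exp (Lf d z)
        = Complex.abs (Xc d z') * Real.exp (Lf d z') := by
      have := congrArg Complex.abs h0
      rwa [abs_mul_exp _ _ (l2c2_re h₂), abs_mul_exp _ _ (l2c2_re h₂)] at this
    have ha1 : Complex.abs (Yc d z) * Real.exp (Lf d z)
        = Complex.abs (Yc d z') * Real.exp (Lf d z') := by
      have := congrArg Complex.abs h1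
      rwa [abs_mul_exp _ _ (c2v_re l₂), abs_mul_exp _ _ (c2v_re l₂)] at this
    set D : ℝ := Lf d z - Lf d z' with hD
    -- |z'0| = |z0| * exp (D / A.re) etc.
    have hz'0 : Complex.abs (z' 0) = Complex.abs (z 0) * Real.exp (D * d.A.re⁻¹) := by
      have h1' : Complex.abs (Xc d z') = Complex.abs (Xc d z) * Real.exp D :=
        exp_cancel_real ha0
      rw [abs_Xc, abs_Xc] at h1'
      have hb : Complex.abs (z' 0) = ((Complex.abs (z' 0)) ^ d.A.re) ^ (d.A.re)⁻¹ := by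
        rw [← Real.rpow_mul (Complex.abs.nonneg _), mul_inv_cancel₀ d.hA.ne', Real.rpow_one]
      rw [hb, h1', Real.mul_rpow (by positivity) (by positivity),
        ← Real.rpow_mul (Complex.abs.nonneg _), mul_inv_cancel₀ d.hA.ne', Real.rpow_one,
        exp_rpow']
    have hz'1 : Complex.abs (z' 1) = Complex.abs (z 1) * Real.exp (D * d.B.re⁻¹) := by
      have h1' : Complex.abs (Yc d z') = Complex.abs (Yc d z) * Real.exp D :=
        exp_cancel_real ha1
      rw [abs_Yc, abs_Yc] at h1'
      have hb : Complex.abs (z' 1) = ((Complex.abs (z' 1)) ^ d.B.re) ^ (d.B.re)⁻¹ := by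
        rw [← Real.rpow_mul (Complex.abs.nonneg _), mul_inv_cancel₀ d.hB.ne', Real.rpow_one]
      rw [hb, h1', Real.mul_rpow (by positivity) (by positivity),
        ← Real.rpow_mul (Complex.abs.nonneg _), mul_inv_cancel₀ d.hB.ne', Real.rpow_one,
        exp_rpow']
    -- norm equation
    have hsq : Complex.abs (z 0) ^ 2 + Complex.abs (z 1) ^ 2
        = Complex.abs (z' 0) ^ 2 + Complex.abs (z' 1) ^ 2 := by
      have h2 : ‖z‖ ^ 2 = ‖z'‖ ^ 2 := by rw [hnorm]
      rw [norm_E2 z, norm_E2 z', Real.sq_sqrt (by positivity), Real.sq_sqrt (by positivity)] at h2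
      exact h2
    have e0 : (Complex.abs (z 0) * Real.exp (D * d.A.re⁻¹)) ^ 2
        = Complex.abs (z 0) ^ 2 * Real.exp (2 * d.A.re⁻¹ * D) := by
      rw [mul_pow, pow_two (Real.exp _), ← Real.exp_add,
        show D * d.A.re⁻¹ + D * d.A.re⁻¹ = 2 * d.A.re⁻¹ * D from by ring]
    have e1 : (Complex.abs (z 1) * Real.exp (D * d.B.re⁻¹)) ^ 2
        = Complex.abs (z 1) ^ 2 * Real.exp (2 * d.B.re⁻¹ * D) := by
      rw [mul_pow, pow_two (Real.exp _), ← Real.exp_add,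
        show D * d.B.re⁻¹ + D * d.B.re⁻¹ = 2 * d.B.re⁻¹ * D from by ring]
    have hkey : Complex.abs (z 0) ^ 2 * Real.exp ((2 * d.A.re⁻¹) * D)
        + Complex.abs (z 1) ^ 2 * Real.exp ((2 * d.B.re⁻¹) * D)
        = Complex.abs (z 0) ^ 2 * Real.exp ((2 * d.A.re⁻¹) * 0)
        + Complex.abs (z 1) ^ 2 * Real.exp ((2 * d.B.re⁻¹) * 0) := by
      rw [hz'0, hz'1, e0, e1] at hsq
      rw [mul_zero, mul_zero, Real.exp_zero, mul_one, mul_one]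
      exact hsq.symm
    have hmono := strict_aux (Complex.abs (z 0) ^ 2) (Complex.abs (z 1) ^ 2)
      (2 * d.A.re⁻¹) (2 * d.B.re⁻¹) (by positivity) (by positivity)
      (by rcases E2_ne_zero hz with h | h
          · exact Or.inl (by have := Complex.abs.pos h; positivity)
          · exact Or.inr (by have := Complex.abs.pos h; positivity))
      (by have := d.hA; positivity) (by have := d.hB; positivity)
    have hD0 : D = 0 := hmono.injective hkey
    have hLL : Lf d z = Lf d z' := by
      have : Lf d z - Lf d z' = 0 := hD0
      linarith
    rw [hLL] at h0 h1
    have hX : Xc d z = Xc d z' := mul_right_cancel₀ (Complex.exp_ne_zero _) h0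
    have hY : Yc d z = Yc d z' := mul_right_cancel₀ (Complex.exp_ne_zero _) h1
    have hz0 : z 0 = z' 0 :=
      phiF_injective d.J d.A d.Jabs d.Jexp d.Jre d.Jinv d.Jreal d.hA hX
    have hz1 : z 1 = z' 1 :=
      phiF_injective d.J d.B d.Jabs d.Jexp d.Jre d.Jinv d.Jreal d.hB hY
    refine PiLp.ext fun i => ?_
    fin_cases i
    · exact hz0
    · exact hz1

/-- squared rpow of a product with exponential -/
lemma rpow_sq_exp (x : ℝ) (hx : 0 ≤ x) (s c : ℝ) (hc : 0 < c) :
    ((x * Real.exp s) ^ c) ^ 2 = x ^ (2 * c) * Real.exp ((2 * c) * s) := by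
  rcases eq_or_lt_of_le hx with h0 | hpos
  · rw [← h0, zero_mul, Real.zero_rpow hc.ne', Real.zero_rpow (by positivity : (2*c) ≠ 0)]
    ring
  · have hxe : 0 < x * Real.exp s := by positivity
    rw [Real.rpow_def_of_pos hxe, Real.log_mul hpos.ne' (Real.exp_ne_zero s), Real.log_exp,
      pow_two, ← Real.exp_add, Real.rpow_def_of_pos hpos]
    rw [show Real.log x * (2*c) = (Real.log x + s) * c + (Real.log x + s) * c - (2*c)*s from by ring]
    rw [Real.exp_sub, Real.exp_add ((Real.log x + s) * c)]
    field_simp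

lemma Phim_surj (d : FData l₁ l₂) (h₂ : l₂.im ≠ 0) (W : E2) :
    ∃ z : E2, Phim d z = W ∧ ‖z‖ = ‖W‖ := by
  by_cases hW : W = 0
  · exact ⟨0, by simp [Phim, hW], by rw [hW]⟩
  · have hNW : (0:ℝ) < ‖W‖ := norm_pos_iff.mpr hW
    set Ad := Adag d.J d.A with hAdd
    set Bd := Adag d.J d.B with hBdd
    have hAd : 0 < Ad.re := Adag_pos d.J d.A d.Jre d.hA
    have hBd : 0 < Bd.re := Adag_pos d.J d.B d.Jre d.hB
    -- the one-parameter family of candidate preimages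
    set zf : ℝ → E2 := fun s => mkE (phiF d.J Ad (W 0 * Complex.exp (l₂ * c2v l₂ * (s : ℂ))))
      (phiF d.J Bd (W 1 * Complex.exp (c2v l₂ * (s : ℂ)))) with hzf
    set k : ℝ → ℝ := fun s => (Complex.abs (W 0)) ^ (2 * Ad.re) * Real.exp ((2 * Ad.re) * s)
      + (Complex.abs (W 1)) ^ (2 * Bd.re) * Real.exp ((2 * Bd.re) * s) with hk
    have hnormsq : ∀ s, ‖zf s‖ ^ 2 = k s := by
      intro s
      rw [hzf]
      simp only
      rw [norm_mkE, Real.sq_sqrt (by positivity)]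
      rw [abs_phiF d.J Ad d.Jabs hAd, abs_phiF d.J Bd d.Jabs hBd,
        abs_mul_exp _ _ (l2c2_re h₂), abs_mul_exp _ _ (c2v_re l₂)]
      rw [rpow_sq_exp _ (Complex.abs.nonneg _) _ _ hAd, rpow_sq_exp _ (Complex.abs.nonneg _) _ _ hBd]
    have hkcont : Continuous k := by
      apply Continuous.add
      · exact continuous_const.mul (Real.continuous_exp.comp (continuous_const.mul continuous_id))
      · exact continuous_const.mul (Real.continuous_exp.comp (continuous_const.mul continuous_id))
    -- k tends to 0 at -infinity
    have hbot : Filter.Tendsto k Filter.atBot (nhds 0) := by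
      have hterm : ∀ c a : ℝ, 0 < a →
          Filter.Tendsto (fun s : ℝ => c * Real.exp (a * s)) Filter.atBot (nhds 0) := by
        intro c a ha
        have h1 : Filter.Tendsto (fun s : ℝ => a * s) Filter.atBot Filter.atBot :=
          Filter.Tendsto.const_mul_atBot ha Filter.tendsto_id
        have h2 := Real.tendsto_exp_atBot.comp h1
        simpa using h2.const_mul c
      have := (hterm ((Complex.abs (W 0)) ^ (2 * Ad.re)) (2 * Ad.re)
          (by positivity : (0:ℝ) < 2 * Ad.re)).add
        (hterm ((Complex.abs (W 1)) ^ (2 * Bd.re)) (2 * Bd.re)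
          (by positivity : (0:ℝ) < 2 * Bd.re))
      simpa using this
    -- k tends to infinity at +infinity
    have htop : Filter.Tendsto k Filter.atTop Filter.atTop := by
      have hterm : ∀ (c a : ℝ), 0 < c → 0 < a →
          Filter.Tendsto (fun s : ℝ => c * Real.exp (a * s)) Filter.atTop Filter.atTop := by
        intro c a hc ha
        have h1 : Filter.Tendsto (fun s : ℝ => a * s) Filter.atTop Filter.atTop :=
          Filter.Tendsto.const_mul_atTop ha Filter.tendsto_id
        exact (Real.tendsto_exp_atTop.comp h1).const_mul_atTop hc
      rcases E2_ne_zero hW with hW0 | hW1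
      · have hc : 0 < (Complex.abs (W 0)) ^ (2 * Ad.re) :=
          Real.rpow_pos_of_pos (Complex.abs.pos hW0) _
        apply Filter.tendsto_atTop_mono _ (hterm _ _ hc (by positivity : (0:ℝ) < 2 * Ad.re))
        intro s
        have : (0:ℝ) ≤ (Complex.abs (W 1)) ^ (2 * Bd.re) * Real.exp ((2 * Bd.re) * s) := by
          positivity
        rw [hk]; simp only; linarith
      · have hc : 0 < (Complex.abs (W 1)) ^ (2 * Bd.re) :=
          Real.rpow_pos_of_pos (Complex.abs.pos hW1) _
        apply Filter.tendsto_atTop_mono _ (hterm _ _ hc (by positivity : (0:ℝ) < 2 * Bd.re))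
        intro s
        have : (0:ℝ) ≤ (Complex.abs (W 0)) ^ (2 * Ad.re) * Real.exp ((2 * Ad.re) * s) := by
          positivity
        rw [hk]; simp only; linarith
    -- find s₀ with k s₀ = ‖W‖²
    have hT : (0:ℝ) < ‖W‖ ^ 2 := by positivity
    obtain ⟨s₁, hs₁⟩ := (hbot.eventually_lt_const hT).exists
    obtain ⟨s₂, hs₂⟩ := (htop.eventually_gt_atTop (‖W‖ ^ 2)).exists
    have hs12 : s₁ ≤ s₂ := by
      by_contra hcon
      push_neg at hcon
      have hmono := strict_aux ((Complex.abs (W 0)) ^ (2 * Ad.re))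
        ((Complex.abs (W 1)) ^ (2 * Bd.re)) (2 * Ad.re) (2 * Bd.re)
        (by positivity) (by positivity)
        (by rcases E2_ne_zero hW with h | h
            · exact Or.inl (Real.rpow_pos_of_pos (Complex.abs.pos h) _)
            · exact Or.inr (Real.rpow_pos_of_pos (Complex.abs.pos h) _))
        (by positivity) (by positivity)
      have : k s₂ < k s₁ := hmono hcon
      linarith
    obtain ⟨s₀, _, hs₀⟩ := intermediate_value_Icc hs12 hkcont.continuousOn
      (Set.mem_Icc.mpr ⟨hs₁.le, hs₂.le⟩)
    -- the preimage
    refine ⟨zf s₀, ?_, ?_⟩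
    · -- Phim d (zf s₀) = W
      have hnz : ‖zf s₀‖ = ‖W‖ := by
        have h2 : ‖zf s₀‖ ^ 2 = ‖W‖ ^ 2 := by rw [hnormsq s₀, hs₀]
        have := congrArg Real.sqrt h2
        rwa [Real.sqrt_sq (norm_nonneg _), Real.sqrt_sq (norm_nonneg _)] at this
      have hzne : zf s₀ ≠ 0 := by
        intro hc
        rw [hc, norm_zero] at hnz
        exact hNW.ne' hnz.symm
      have hX : Xc d (zf s₀) = W 0 * Complex.exp (l₂ * c2v l₂ * (s₀ : ℂ)) := by
        rw [Xc, hzf]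
        exact phiF_comp d.J d.A Ad d.Jabs d.Jexp d.Jinv d.Jreal hAd
          (dag_left d.J d.A d.Jre d.Jinv d.Jreal d.hA) _
      have hY : Yc d (zf s₀) = W 1 * Complex.exp (c2v l₂ * (s₀ : ℂ)) := by
        rw [Yc, hzf]
        exact phiF_comp d.J d.B Bd d.Jabs d.Jexp d.Jinv d.Jreal hBd
          (dag_left d.J d.B d.Jre d.Jinv d.Jreal d.hB) _
      have hSf : Sf d (zf s₀) = Real.exp s₀ * ‖W‖ := by
        rw [Sf, hX, hY, abs_mul_exp _ _ (l2c2_re h₂), abs_mul_exp _ _ (c2v_re l₂)]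
        rw [show (Complex.abs (W 0) * Real.exp s₀) ^ 2 + (Complex.abs (W 1) * Real.exp s₀) ^ 2
            = (Real.exp s₀) ^ 2 * (Complex.abs (W 0) ^ 2 + Complex.abs (W 1) ^ 2) from by ring]
        rw [Real.sqrt_mul (by positivity), Real.sqrt_sq (Real.exp_pos _).le, ← norm_E2]
      have hLf : Lf d (zf s₀) = -s₀ := by
        rw [Lf, hnz, hSf, Real.log_mul (Real.exp_ne_zero _) hNW.ne', Real.log_exp]
        ring
      rw [Phim, if_neg hzne, hX, hY, hLf]
      have hc1 : Complex.exp (l₂ * c2v l₂ * ((s₀ : ℝ) : ℂ))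
          * Complex.exp (l₂ * c2v l₂ * ((-s₀ : ℝ) : ℂ)) = 1 := by
        rw [← Complex.exp_add, show l₂ * c2v l₂ * ((s₀:ℝ) : ℂ) + l₂ * c2v l₂ * ((-s₀:ℝ) : ℂ)
          = l₂ * c2v l₂ * (((s₀:ℝ):ℂ) + ((-s₀:ℝ):ℂ)) from by ring]
        push_cast
        rw [show ((s₀:ℂ) + -(s₀:ℂ)) = 0 from by ring, mul_zero, Complex.exp_zero]
      have hc2 : Complex.exp (c2v l₂ * ((s₀ : ℝ) : ℂ))
          * Complex.exp (c2v l₂ * ((-s₀ : ℝ) : ℂ)) = 1 := by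
        rw [← Complex.exp_add, show c2v l₂ * ((s₀:ℝ) : ℂ) + c2v l₂ * ((-s₀:ℝ) : ℂ)
          = c2v l₂ * (((s₀:ℝ):ℂ) + ((-s₀:ℝ):ℂ)) from by ring]
        push_cast
        rw [show ((s₀:ℂ) + -(s₀:ℂ)) = 0 from by ring, mul_zero, Complex.exp_zero]
      rw [mul_assoc (W 0) _ _, mul_assoc (W 1) _ _, hc1, hc2, mul_one, mul_one, mkE_self]
    · have h2 : ‖zf s₀‖ ^ 2 = ‖W‖ ^ 2 := by rw [hnormsq s₀, hs₀]
      have := congrArg Real.sqrt h2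
      rwa [Real.sqrt_sq (norm_nonneg _), Real.sqrt_sq (norm_nonneg _)] at this

/-! ### Leaf correspondence -/

lemma leaf_iff (d : FData l₁ l₂) (h₂ : l₂.im ≠ 0) {p q : E2} (hp : p ≠ 0) (hq : q ≠ 0) :
    (∃ t : ℂ, q 0 = p 0 * Complex.exp (l₁ * t) ∧ q 1 = p 1 * Complex.exp t) ↔
    (∃ s : ℂ, (Phim d q) 0 = (Phim d p) 0 * Complex.exp (l₂ * s) ∧
       (Phim d q) 1 = (Phim d p) 1 * Complex.exp s) := by
  have hPq0 : (Phim d q) 0 = Xc d q * Complex.exp (l₂ * c2v l₂ * (Lf d q : ℂ)) := by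
    rw [Phim, if_neg hq]; rfl
  have hPq1 : (Phim d q) 1 = Yc d q * Complex.exp (c2v l₂ * (Lf d q : ℂ)) := by
    rw [Phim, if_neg hq]; rfl
  have hPp0 : (Phim d p) 0 = Xc d p * Complex.exp (l₂ * c2v l₂ * (Lf d p : ℂ)) := by
    rw [Phim, if_neg hp]; rfl
  have hPp1 : (Phim d p) 1 = Yc d p * Complex.exp (c2v l₂ * (Lf d p : ℂ)) := by
    rw [Phim, if_neg hp]; rfl
  constructor
  · rintro ⟨t, ht0, ht1⟩
    refine ⟨(d.J t + (d.B - 1) * (t.re : ℂ)) + c2v l₂ * ((Lf d q : ℝ) - (Lf d p : ℝ) : ℝ), ?_, ?_⟩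
    · rw [hPq0, hPp0]
      have hXq : Xc d q = Xc d p * Complex.exp (l₂ * (d.J t + (d.B - 1) * (t.re : ℂ))) := by
        rw [Xc, Xc, ht0, phiF_hom d.J d.A d.Jexp, d.star t]
      rw [hXq, mul_assoc (Xc d p) _ _, mul_assoc (Xc d p) _ _, ← Complex.exp_add,
        ← Complex.exp_add]
      congr 1
      push_cast
      ring
    · rw [hPq1, hPp1]
      have hYq : Yc d q = Yc d p * Complex.exp (d.J t + (d.B - 1) * (t.re : ℂ)) := by
        rw [Yc, Yc, ht1, phiF_hom d.J d.B d.Jexp]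
      rw [hYq, mul_assoc (Yc d p) _ _, mul_assoc (Yc d p) _ _, ← Complex.exp_add,
        ← Complex.exp_add]
      congr 1
      push_cast
      ring
  · rintro ⟨s, hs0, hs1⟩
    rw [hPq0, hPp0] at hs0
    rw [hPq1, hPp1] at hs1
    set sp : ℂ := s + c2v l₂ * (((Lf d p : ℝ) : ℂ) - ((Lf d q : ℝ) : ℂ)) with hsp
    have hBre : d.B.re ≠ 0 := d.hB.ne'
    set t : ℂ := d.J (sp - (d.B - 1) * ((sp.re / d.B.re : ℝ) : ℂ)) with htdef
    have htre : t.re = sp.re / d.B.re := by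
      rw [htdef, d.Jre, Complex.sub_re, Complex.re_mul_ofReal, Complex.sub_re, Complex.one_re]
      field_simp
      ring
    have hJt : d.J t = sp - (d.B - 1) * ((sp.re / d.B.re : ℝ) : ℂ) := by
      rw [htdef, d.Jinv]
    have hCt : d.J t + (d.B - 1) * ((t.re : ℝ) : ℂ) = sp := by
      rw [hJt, htre]
      ring
    -- first coordinate
    rw [mul_assoc (Xc d p) _ _, ← Complex.exp_add] at hs0
    have hXq : Xc d q = Xc d p * Complex.exp (l₂ * sp) := by
      have h' := exp_cancel hs0
      rw [h']
      congr 1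
      rw [hsp]
      push_cast
      ring
    have hXq' : Xc d q = phiF d.J d.A (p 0 * Complex.exp (l₁ * t)) := by
      rw [phiF_hom d.J d.A d.Jexp, d.star t, ← Xc, hXq, ← hCt]
    have hq0 : q 0 = p 0 * Complex.exp (l₁ * t) :=
      phiF_injective d.J d.A d.Jabs d.Jexp d.Jre d.Jinv d.Jreal d.hA hXq'
    -- second coordinate
    rw [mul_assoc (Yc d p) _ _, ← Complex.exp_add] at hs1
    have hYq : Yc d q = Yc d p * Complex.exp sp := by
      have h' := exp_cancel hs1
      rw [h']
      congr 1
      rw [hsp]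
      push_cast
      ring
    have hYq' : Yc d q = phiF d.J d.B (p 1 * Complex.exp t) := by
      rw [phiF_hom d.J d.B d.Jexp, ← Yc, hYq, ← hCt]
    have hq1 : q 1 = p 1 * Complex.exp t :=
      phiF_injective d.J d.B d.Jabs d.Jexp d.Jre d.Jinv d.Jreal d.hB hYq'
    exact ⟨t, hq0, hq1⟩

end Main

end

/-- For λ₁, λ₂ ∈ ℂ \ ℝ, the holomorphic foliation germs given by
λ₁x ∂/∂x + y ∂/∂y and λ₂x ∂/∂x + y ∂/∂y are topologically equivalent: there is a
homeomorphism Φ of the closed unit ball of ℂ² onto itself fixing 0 which maps leaf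
traces onto leaf traces. -/
theorem stmt0 (l₁ l₂ : ℂ) (h₁ : l₁.im ≠ 0) (h₂ : l₂.im ≠ 0) :
    ∃ Φ : (Metric.closedBall (0 : EuclideanSpace ℂ (Fin 2)) 1 : Set (EuclideanSpace ℂ (Fin 2))) ≃ₜ
          (Metric.closedBall (0 : EuclideanSpace ℂ (Fin 2)) 1 : Set (EuclideanSpace ℂ (Fin 2))),
      ((Φ ⟨0, Metric.mem_closedBall_self zero_le_one⟩ : EuclideanSpace ℂ (Fin 2)) = 0) ∧
      ∀ p q : (Metric.closedBall (0 : EuclideanSpace ℂ (Fin 2)) 1 : Set (EuclideanSpace ℂ (Fin 2))),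
        (p : EuclideanSpace ℂ (Fin 2)) ≠ 0 → (q : EuclideanSpace ℂ (Fin 2)) ≠ 0 →
        ((∃ t : ℂ,
            (q : EuclideanSpace ℂ (Fin 2)) 0 = (p : EuclideanSpace ℂ (Fin 2)) 0 * Complex.exp (l₁ * t) ∧
            (q : EuclideanSpace ℂ (Fin 2)) 1 = (p : EuclideanSpace ℂ (Fin 2)) 1 * Complex.exp t) ↔
         (∃ s : ℂ,
            (Φ q : EuclideanSpace ℂ (Fin 2)) 0 = (Φ p : EuclideanSpace ℂ (Fin 2)) 0 * Complex.exp (l₂ * s) ∧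
            (Φ q : EuclideanSpace ℂ (Fin 2)) 1 = (Φ p : EuclideanSpace ℂ (Fin 2)) 1 * Complex.exp s)) := by
  obtain ⟨d⟩ := fdata_exists l₁ l₂ h₁ h₂
  have hmem : ∀ z : (Metric.closedBall (0 : E2) 1 : Set E2),
      Phim d (z : E2) ∈ Metric.closedBall (0 : E2) 1 := by
    intro z
    rw [Metric.mem_closedBall, dist_zero_right, norm_Phim d h₂]
    have := z.2
    rwa [Metric.mem_closedBall, dist_zero_right] at this
  let F : (Metric.closedBall (0 : E2) 1 : Set E2) → (Metric.closedBall (0 : E2) 1 : Set E2) :=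
    fun z => ⟨Phim d z, hmem z⟩
  have hFinj : Function.Injective F := fun a b hab =>
    Subtype.ext (Phim_inj d h₂ (congrArg Subtype.val hab))
  have hFsurj : Function.Surjective F := by
    intro w
    obtain ⟨z, hz1, hz2⟩ := Phim_surj d h₂ (w : E2)
    have hzmem : z ∈ Metric.closedBall (0 : E2) 1 := by
      rw [Metric.mem_closedBall, dist_zero_right, hz2]
      have := w.2
      rwa [Metric.mem_closedBall, dist_zero_right] at this
    exact ⟨⟨z, hzmem⟩, Subtype.ext hz1⟩
  let e : (Metric.closedBall (0 : E2) 1 : Set E2) ≃ (Metric.closedBall (0 : E2) 1 : Set E2) :=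
    Equiv.ofBijective F ⟨hFinj, hFsurj⟩
  haveI : CompactSpace (Metric.closedBall (0 : E2) 1 : Set E2) :=
    isCompact_iff_compactSpace.mp (isCompact_closedBall (0 : E2) 1)
  have hFcont : Continuous (e : (Metric.closedBall (0 : E2) 1 : Set E2) →
      (Metric.closedBall (0 : E2) 1 : Set E2)) :=
    Continuous.subtype_mk ((continuous_Phim d h₂).comp continuous_subtype_val) _
  refine ⟨hFcont.homeoOfEquivCompactToT2, ?_, ?_⟩
  · show Phim d (0 : E2) = 0
    simp [Phim]
  · intro p q hp hq
    have hgoal := leaf_iff d h₂ hp hq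
    exact hgoal
end
end

section
/- Let T² = (ℝ/2πℤ) × (ℝ/2πℤ) be the 2-dimensional torus. Let λ ∈ ℝ, let a, b, c, d ∈ ℤ with a·d − b·c = 1 or a·d − b·c = −1, assume c·λ + d ≠ 0, and set μ = (a·λ + b)/(c·λ + d). Then the map φ : T² → T² induced by (x,y) ↦ (a·x + b·y, c·x + d·y) is a well-defined homeomorphism, and for every point P ∈ T², φ maps the orbit {t ·_λ P : t ∈ ℝ} onto the orbit {s ·_μ φ(P) : s ∈ ℝ}; in fact φ(t ·_λ P) = ((c·λ + d)·t) ·_μ φ(P) for all t ∈ ℝ. Hence the Kronecker foliations F_λ and F_μ on T² are topologically equivalent. -/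
private lemma comb2 {G : Type*} [AddCommGroup G] (k l m n m' n' : ℤ) (p q : G) :
    k • (m • p + n • q) + l • (m' • p + n' • q)
      = (k * m + l * m') • p + (k * n + l * n') • q := by
  simp only [smul_add, smul_smul, add_smul]
  abel

/-- For λ ∈ ℝ and an integer matrix [[a,b],[c,d]] with determinant ±1 and
cλ + d ≠ 0, setting μ = (aλ+b)/(cλ+d), the map of the torus T² = (ℝ/2πℤ)² induced by
(x,y) ↦ (ax+by, cx+dy) is a well-defined homeomorphism mapping each orbit of the
Kronecker flow ·_λ onto an orbit of ·_μ; in fact φ(t ·_λ P) = ((cλ+d)t) ·_μ φ(P).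
Hence the Kronecker foliations F_λ and F_μ are topologically equivalent. -/
theorem stmt2 (lam : ℝ) (a b c d : ℤ)
    (hdet : a * d - b * c = 1 ∨ a * d - b * c = -1)
    (hc : (c : ℝ) * lam + d ≠ 0)
    (mu : ℝ) (hmu : mu = ((a : ℝ) * lam + b) / ((c : ℝ) * lam + d)) :
    ∃ φ : (AddCircle (2 * Real.pi) × AddCircle (2 * Real.pi)) ≃ₜ
          (AddCircle (2 * Real.pi) × AddCircle (2 * Real.pi)),
      (∀ x y : ℝ,
        φ ((x : AddCircle (2 * Real.pi)), (y : AddCircle (2 * Real.pi))) =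
          ((((a : ℝ) * x + (b : ℝ) * y : ℝ) : AddCircle (2 * Real.pi)),
           (((c : ℝ) * x + (d : ℝ) * y : ℝ) : AddCircle (2 * Real.pi)))) ∧
      (∀ P : AddCircle (2 * Real.pi) × AddCircle (2 * Real.pi), ∀ t : ℝ,
        φ (P.1 + ((lam * t : ℝ) : AddCircle (2 * Real.pi)),
           P.2 + ((t : ℝ) : AddCircle (2 * Real.pi))) =
          ((φ P).1 + ((mu * (((c : ℝ) * lam + d) * t) : ℝ) : AddCircle (2 * Real.pi)),
           (φ P).2 + ((((c : ℝ) * lam + d) * t : ℝ) : AddCircle (2 * Real.pi)))) ∧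
      (∀ P : AddCircle (2 * Real.pi) × AddCircle (2 * Real.pi),
        φ '' {Q | ∃ t : ℝ, Q = (P.1 + ((lam * t : ℝ) : AddCircle (2 * Real.pi)),
                                P.2 + ((t : ℝ) : AddCircle (2 * Real.pi)))} =
          {Q | ∃ s : ℝ, Q = ((φ P).1 + ((mu * s : ℝ) : AddCircle (2 * Real.pi)),
                             (φ P).2 + ((s : ℝ) : AddCircle (2 * Real.pi)))}) := by
  set T := AddCircle (2 * Real.pi) with hT
  set e : ℤ := a * d - b * c with he
  have he2 : e * e = 1 := by rcases hdet with h | h <;> rw [h] <;> norm_num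
  have hcz : ∀ (n : ℤ) (z : ℝ), n • ((z : ℝ) : T) = (((n : ℝ) * z : ℝ) : T) := by
    intro n z
    rw [← QuotientAddGroup.mk_zsmul, zsmul_eq_mul]
  have hleft : Function.LeftInverse
      (fun p : T × T => ((e * d) • p.1 + (-(e * b)) • p.2, (-(e * c)) • p.1 + (e * a) • p.2))
      (fun p : T × T => (a • p.1 + b • p.2, c • p.1 + d • p.2)) := by
    rintro ⟨p, q⟩
    simp only [Prod.mk.injEq]
    constructor
    · rw [comb2]
      have h1 : e * d * a + -(e * b) * c = 1 := by rw [he] at he2 ⊢; nlinarith [he2]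
      have h2 : e * d * b + -(e * b) * d = 0 := by ring
      rw [h1, h2, one_smul, zero_smul, add_zero]
    · rw [comb2]
      have h1 : -(e * c) * a + e * a * c = 0 := by ring
      have h2 : -(e * c) * b + e * a * d = 1 := by rw [he] at he2 ⊢; nlinarith [he2]
      rw [h1, h2, one_smul, zero_smul, zero_add]
  have hright : Function.RightInverse
      (fun p : T × T => ((e * d) • p.1 + (-(e * b)) • p.2, (-(e * c)) • p.1 + (e * a) • p.2))
      (fun p : T × T => (a • p.1 + b • p.2, c • p.1 + d • p.2)) := by
    rintro ⟨p, q⟩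
    simp only [Prod.mk.injEq]
    constructor
    · rw [comb2]
      have h1 : a * (e * d) + b * -(e * c) = 1 := by rw [he] at he2 ⊢; nlinarith [he2]
      have h2 : a * -(e * b) + b * (e * a) = 0 := by ring
      rw [h1, h2, one_smul, zero_smul, add_zero]
    · rw [comb2]
      have h1 : c * (e * d) + d * -(e * c) = 0 := by ring
      have h2 : c * -(e * b) + d * (e * a) = 1 := by rw [he] at he2 ⊢; nlinarith [he2]
      rw [h1, h2, one_smul, zero_smul, zero_add]
  let φ : (T × T) ≃ₜ (T × T) :=
    { toFun := fun p => (a • p.1 + b • p.2, c • p.1 + d • p.2)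
      invFun := fun p => ((e * d) • p.1 + (-(e * b)) • p.2, (-(e * c)) • p.1 + (e * a) • p.2)
      left_inv := hleft
      right_inv := hright
      continuous_toFun := (((continuous_zsmul a).comp continuous_fst).add
        ((continuous_zsmul b).comp continuous_snd)).prodMk
        (((continuous_zsmul c).comp continuous_fst).add
        ((continuous_zsmul d).comp continuous_snd))
      continuous_invFun := (((continuous_zsmul (e * d)).comp continuous_fst).add
        ((continuous_zsmul (-(e * b))).comp continuous_snd)).prodMk
        (((continuous_zsmul (-(e * c))).comp continuous_fst).add
        ((continuous_zsmul (e * a)).comp continuous_snd)) }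
  have hφ : ∀ p : T × T, φ p = (a • p.1 + b • p.2, c • p.1 + d • p.2) := fun _ => rfl
  have key : ∀ P : T × T, ∀ t : ℝ,
      φ (P.1 + ((lam * t : ℝ) : T), P.2 + ((t : ℝ) : T)) =
        ((φ P).1 + ((mu * (((c : ℝ) * lam + d) * t) : ℝ) : T),
         (φ P).2 + ((((c : ℝ) * lam + d) * t : ℝ) : T)) := by
    intro P t
    have hmu1 : mu * (((c : ℝ) * lam + d) * t) = (a : ℝ) * (lam * t) + (b : ℝ) * t := by
      rw [hmu, div_mul_eq_mul_div, div_eq_iff hc]; ring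
    have hmu2 : ((c : ℝ) * lam + d) * t = (c : ℝ) * (lam * t) + (d : ℝ) * t := by ring
    rw [hφ, hφ]
    simp only [smul_add]
    rw [hcz a, hcz b, hcz c, hcz d, hmu1, hmu2]
    simp only [QuotientAddGroup.mk_add, Prod.mk.injEq]
    constructor <;> abel
  refine ⟨φ, ?_, key, ?_⟩
  · intro x y
    rw [hφ]
    simp only
    rw [hcz a x, hcz b y, hcz c x, hcz d y,
      ← QuotientAddGroup.mk_add, ← QuotientAddGroup.mk_add]
  · intro P
    ext Q
    simp only [Set.mem_image, Set.mem_setOf_eq]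
    constructor
    · rintro ⟨Q', ⟨t, rfl⟩, rfl⟩
      exact ⟨((c : ℝ) * lam + d) * t, key P t⟩
    · rintro ⟨s, rfl⟩
      refine ⟨(P.1 + ((lam * (s / ((c : ℝ) * lam + d)) : ℝ) : T),
              P.2 + (((s / ((c : ℝ) * lam + d)) : ℝ) : T)),
        ⟨s / ((c : ℝ) * lam + d), rfl⟩, ?_⟩
      rw [key P (s / ((c : ℝ) * lam + d)), mul_div_cancel₀ s hc]
end

section
/- Let m ≥ 1 be an integer and let a, b ∈ ℂ with |a|² + |b|² = 1 and b ≠ 0. Let S = {t ∈ ℂ : |(a + bᵐ·t)·exp(m·t)|² + |b·exp(t)|² = 1} (the parameter set of the intersection of the integral curve of (mx + yᵐ) ∂/∂x + y ∂/∂y through (a,b) with the unit sphere). Then 0 ∈ S, and there exists a real number t₀ ≥ 0 such that for every r ∈ ℝ: the set {s ∈ ℝ : r + i·s ∈ S} has exactly two elements if r < t₀, exactly one element if r = t₀, and is empty if r > t₀. -/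
open Complex Set Filter Topology

private lemma exists_gt_right' (f : ℝ → ℝ) (f' c u : ℝ) (hf : HasDerivAt f f' c)
    (hf' : 0 < f') (hcu : c < u) : ∃ v, c < v ∧ v < u ∧ f c < f v := by
  have h := hasDerivAt_iff_tendsto_slope.mp hf
  have h1 : ∀ᶠ v in 𝓝[≠] c, 0 < slope f c v := h.eventually (eventually_gt_nhds hf')
  have h2 : ∀ᶠ v in 𝓝[>] c, 0 < slope f c v :=
    h1.filter_mono (nhdsWithin_mono c fun x hx => ne_of_gt hx)
  have h3 : Ioo c u ∈ 𝓝[>] c := Ioo_mem_nhdsGT_of_mem ⟨le_refl c, hcu⟩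
  obtain ⟨v, hv, hmem⟩ := (h2.and (eventually_of_mem h3 fun _ h => h)).exists
  refine ⟨v, hmem.1, hmem.2, ?_⟩
  rw [slope_def_field] at hv
  rcases div_pos_iff.mp hv with ⟨h4, h5⟩ | ⟨h4, h5⟩
  · linarith
  · linarith [hmem.1]

private lemma exists_lt_left' (f : ℝ → ℝ) (f' c u : ℝ) (hf : HasDerivAt f f' c)
    (hf' : 0 < f') (hcu : u < c) : ∃ v, u < v ∧ v < c ∧ f v < f c := by
  have h := hasDerivAt_iff_tendsto_slope.mp hf
  have h1 : ∀ᶠ v in 𝓝[≠] c, 0 < slope f c v := h.eventually (eventually_gt_nhds hf')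
  have h2 : ∀ᶠ v in 𝓝[<] c, 0 < slope f c v :=
    h1.filter_mono (nhdsWithin_mono c fun x hx => ne_of_lt hx)
  have h3 : Ioo u c ∈ 𝓝[<] c := Ioo_mem_nhdsLT_of_mem ⟨hcu, le_refl c⟩
  obtain ⟨v, hv, hmem⟩ := (h2.and (eventually_of_mem h3 fun _ h => h)).exists
  refine ⟨v, hmem.1, hmem.2, ?_⟩
  rw [slope_def_field] at hv
  rcases div_pos_iff.mp hv with ⟨h4, h5⟩ | ⟨h4, h5⟩
  · linarith [hmem.2]
  · linarith

private lemma claimA' (M D : ℝ → ℝ) (hd : ∀ r, HasDerivAt M (D r) r)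
    (hpos : ∀ r, M r ≤ 1 → 0 < D r) :
    ∀ r₁ r₂ : ℝ, r₁ < r₂ → M r₂ ≤ 1 → M r₁ < 1 := by
  intro r₁ r₂ h12 h2
  by_contra hc
  push_neg at hc
  have hMcont : Continuous M := by
    rw [continuous_iff_continuousAt]; exact fun r => (hd r).continuousAt
  obtain ⟨u, hu1, hu2, hu3⟩ : ∃ u, r₁ < u ∧ u ≤ r₂ ∧ M u < 1 := by
    rcases lt_or_eq_of_le h2 with h | h
    · exact ⟨r₂, h12, le_refl _, h⟩
    · obtain ⟨v, hv1, hv2, hv3⟩ := exists_lt_left' M (D r₂) r₂ r₁ (hd r₂) (hpos r₂ h2) h12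
      exact ⟨v, hv1, hv2.le, by rw [h] at hv3; exact hv3⟩
  set A : Set ℝ := Icc r₁ u ∩ {v | 1 ≤ M v} with hA
  have hAne : A.Nonempty := ⟨r₁, ⟨le_refl _, hu1.le⟩, hc⟩
  have hAbdd : BddAbove A := ⟨u, fun v hv => hv.1.2⟩
  have hAclosed : IsClosed A := isClosed_Icc.inter (isClosed_Ici.preimage hMcont)
  set c := sSup A with hcdef
  have hcA : c ∈ A := hAclosed.csSup_mem hAne hAbdd
  have hc1 : 1 ≤ M c := hcA.2
  have hcu : c < u := lt_of_le_of_ne hcA.1.2 (by intro h; rw [h] at hc1; linarith)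
  have hub : ∀ v, c < v → v ≤ u → M v < 1 := by
    intro v hv1 hv2
    by_contra hle
    push_neg at hle
    have : v ∈ A := ⟨⟨hcA.1.1.trans hv1.le, hv2⟩, hle⟩
    exact absurd (le_csSup hAbdd this) (not_le.mpr hv1)
  have hcle : M c ≤ 1 := by
    have ht : Tendsto M (𝓝[>] c) (𝓝 (M c)) :=
      (hMcont.tendsto c).mono_left nhdsWithin_le_nhds
    refine le_of_tendsto ht ?_
    filter_upwards [Ioo_mem_nhdsGT_of_mem ⟨le_refl c, hcu⟩] with v hv
    exact (hub v hv.1 hv.2.le).le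
  obtain ⟨v, hv1, hv2, hv3⟩ := exists_gt_right' M (D c) c u (hd c) (hpos c hcle) hcu
  exact absurd (hub v hv1 hv2.le) (not_lt.mpr (le_trans hc1 hv3.le))

/-- For m ≥ 1 and (a,b) on the unit sphere of ℂ² with b ≠ 0, the parameter
set S of the intersection of the integral curve of (mx + yᵐ)∂/∂x + y∂/∂y through (a,b)
with the unit sphere contains 0, and there is t₀ ≥ 0 such that on each vertical line
Re t = r the set S has exactly two points if r < t₀, one point if r = t₀, and is empty
if r > t₀. -/
theorem stmt4 (m : ℕ) (hm : 1 ≤ m) (a b : ℂ)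
    (hab : ‖a‖ ^ 2 + ‖b‖ ^ 2 = 1) (hb : b ≠ 0) :
    (0 : ℂ) ∈ {t : ℂ | ‖(a + b ^ m * t) * Complex.exp ((m : ℂ) * t)‖ ^ 2 +
        ‖b * Complex.exp t‖ ^ 2 = 1} ∧
    ∃ t₀ : ℝ, 0 ≤ t₀ ∧ ∀ r : ℝ,
      (r < t₀ →
        {s : ℝ | ((r : ℂ) + (s : ℂ) * Complex.I) ∈
          {t : ℂ | ‖(a + b ^ m * t) * Complex.exp ((m : ℂ) * t)‖ ^ 2 +
            ‖b * Complex.exp t‖ ^ 2 = 1}}.encard = 2) ∧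
      (r = t₀ →
        {s : ℝ | ((r : ℂ) + (s : ℂ) * Complex.I) ∈
          {t : ℂ | ‖(a + b ^ m * t) * Complex.exp ((m : ℂ) * t)‖ ^ 2 +
            ‖b * Complex.exp t‖ ^ 2 = 1}}.encard = 1) ∧
      (t₀ < r →
        {s : ℝ | ((r : ℂ) + (s : ℂ) * Complex.I) ∈
          {t : ℂ | ‖(a + b ^ m * t) * Complex.exp ((m : ℂ) * t)‖ ^ 2 +
            ‖b * Complex.exp t‖ ^ 2 = 1}} = ∅) := by
  have hb2 : 0 < normSq b := normSq_pos.mpr hb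
  have hab' : normSq a + normSq b = 1 := by
    rw [← Complex.sq_norm a, ← Complex.sq_norm b]; exact hab
  have hK0 : 0 < normSq (b ^ m) := normSq_pos.mpr (pow_ne_zero m hb)
  set K : ℝ := normSq (b ^ m) with hKdef
  have hKpow : K = normSq b ^ m := by rw [hKdef, map_pow]
  set α : ℝ := (a * (starRingEnd ℂ) (b ^ m)).re with hαdef
  set M : ℝ → ℝ := fun r => Real.exp (2 * m * r) * (α + K * r) ^ 2 / K
      + normSq b * Real.exp (2 * r) with hMdef
  set D : ℝ → ℝ := fun r => (Real.exp (2 * m * r) * (2 * m) * (α + K * r) ^ 2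
      + Real.exp (2 * m * r) * (2 * (α + K * r) * K)) / K
      + normSq b * (Real.exp (2 * r) * 2) with hDdef
  -- derivative
  have hd : ∀ r, HasDerivAt M (D r) r := by
    intro r
    have h1 : HasDerivAt (fun r : ℝ => Real.exp (2 * m * r)) (Real.exp (2 * m * r) * (2 * m)) r :=
      (((hasDerivAt_id r).const_mul ((2 : ℝ) * m)).exp).congr_deriv (by simp only [id_eq]; ring)
    have h2 : HasDerivAt (fun r : ℝ => (α + K * r) ^ 2) (2 * (α + K * r) * K) r := by
      have := (((hasDerivAt_id r).const_mul K).const_add α).pow 2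
      exact this.congr_deriv (by simp only [id_eq]; push_cast; ring)
    have h3 : HasDerivAt (fun r : ℝ => Real.exp (2 * r)) (Real.exp (2 * r) * 2) r :=
      (((hasDerivAt_id r).const_mul (2 : ℝ)).exp).congr_deriv (by simp only [id_eq]; ring)
    exact ((h1.mul h2).div_const K).add (h3.const_mul (normSq b))
  have hMcont : Continuous M := by
    rw [continuous_iff_continuousAt]; exact fun r => (hd r).continuousAt
  -- derivative positive on sublevel set
  have hpos : ∀ r, M r ≤ 1 → 0 < D r := by
    intro r hMr
    set E := Real.exp (2 * m * r) with hE
    set q := α + K * r with hq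
    set Y := normSq b * Real.exp (2 * r) with hY
    have hE0 : 0 < E := Real.exp_pos _
    have hY0 : 0 < Y := mul_pos hb2 (Real.exp_pos _)
    have hP0 : 0 ≤ E * q ^ 2 / K := by positivity
    have hMr' : E * q ^ 2 / K + Y ≤ 1 := hMr
    have hY1 : Y ≤ 1 := by linarith
    have hEK : E * K = Y ^ m := by
      rw [hY, hE, hKpow, mul_pow, ← Real.exp_nat_mul]; ring_nf
    have hYm : Y ^ m ≤ Y := by
      calc Y ^ m ≤ Y ^ 1 := pow_le_pow_of_le_one hY0.le hY1 hm
      _ = Y := pow_one Y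
    have hsq : (E * q) ^ 2 ≤ (E * q ^ 2 / K) * Y := by
      have h1 : (E * q) ^ 2 = (E * q ^ 2 / K) * (E * K) := by
        field_simp
      rw [h1, hEK]
      exact mul_le_mul_of_nonneg_left hYm hP0
    set P := E * q ^ 2 / K with hP
    have hm1 : (1 : ℝ) ≤ (m : ℝ) := by exact_mod_cast hm
    have hmP : P ≤ (m : ℝ) * P := le_mul_of_one_le_left hP0 hm1
    have hkey2 : 0 < P + E * q + Y := by
      by_contra hcon
      push_neg at hcon
      have h1 : P + Y ≤ -(E * q) := by linarith
      have h2 : (P + Y) * (P + Y) ≤ (-(E * q)) * (-(E * q)) :=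
        mul_self_le_mul_self (by linarith) h1
      nlinarith [sq_nonneg (P - Y), mul_nonneg hP0 hY0.le, mul_pos hY0 hY0]
    have hkey : 0 < (m : ℝ) * P + E * q + Y := by linarith
    have hDeq : D r = ((m : ℝ) * P + E * q + Y) * 2 := by
      rw [hDdef]; simp only; rw [hP]
      field_simp
      ring
    rw [hDeq]; positivity
  -- M 0 ≤ 1
  have hα2 : α ^ 2 ≤ normSq a * K := by
    have h1 : α ^ 2 ≤ normSq (a * (starRingEnd ℂ) (b ^ m)) := by
      rw [hαdef, Complex.normSq_apply]
      nlinarith [sq_nonneg ((a * (starRingEnd ℂ) (b ^ m)).im)]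
    calc α ^ 2 ≤ normSq (a * (starRingEnd ℂ) (b ^ m)) := h1
      _ = normSq a * K := by rw [map_mul, Complex.normSq_conj]
  have hM0 : M 0 ≤ 1 := by
    have : M 0 = α ^ 2 / K + normSq b := by
      rw [hMdef]; simp
    rw [this]
    have : α ^ 2 / K ≤ normSq a := (div_le_iff₀ hK0).mpr (by linarith)
    linarith
  -- the sublevel set and its sup
  set T : Set ℝ := {r : ℝ | M r ≤ 1} with hTdef
  have hTne : T.Nonempty := ⟨0, hM0⟩
  have hTbdd : BddAbove T := by
    refine ⟨Real.log (normSq b)⁻¹ / 2, fun r hr => ?_⟩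
    have h1 : normSq b * Real.exp (2 * r) ≤ 1 := by
      have h2 : 0 ≤ Real.exp (2 * m * r) * (α + K * r) ^ 2 / K := by positivity
      have h3 : M r ≤ 1 := hr
      rw [hMdef] at h3; simp only at h3; linarith
    have h2 : Real.exp (2 * r) ≤ (normSq b)⁻¹ := by
      rw [← one_div]
      exact (le_div_iff₀ hb2).mpr (by linarith [mul_comm (Real.exp (2 * r)) (normSq b)])
    have h3 : 2 * r ≤ Real.log (normSq b)⁻¹ :=
      (Real.le_log_iff_exp_le (by positivity)).mpr h2
    linarith
  set t₀ : ℝ := sSup T with ht₀def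
  have h0t : 0 ≤ t₀ := le_csSup hTbdd hM0
  have hTclosed : IsClosed T := isClosed_Iic.preimage hMcont
  have hMt0le : M t₀ ≤ 1 := hTclosed.csSup_mem hTne hTbdd
  have hMt0 : M t₀ = 1 := by
    rcases lt_or_eq_of_le hMt0le with h | h
    · exfalso
      have h1 : ∀ᶠ v in 𝓝 t₀, M v < 1 := hMcont.continuousAt.eventually (eventually_lt_nhds h)
      have h2 : ∀ᶠ v in 𝓝[>] t₀, M v < 1 := h1.filter_mono nhdsWithin_le_nhds
      obtain ⟨v, hv1, hv2⟩ := (h2.and self_mem_nhdsWithin).exists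
      exact absurd (le_csSup hTbdd hv1.le) (not_le.mpr hv2)
    · exact h
  have hlt : ∀ r : ℝ, r < t₀ → M r < 1 := by
    intro r hr
    obtain ⟨u, hu1, hu2⟩ : ∃ u ∈ T, r < u := by
      by_contra hcon
      push_neg at hcon
      exact absurd (csSup_le hTne hcon) (not_le.mpr hr)
    exact claimA' M D hd hpos r u hu2 hu1
  have hgt : ∀ r : ℝ, t₀ < r → 1 < M r := by
    intro r hr
    by_contra hcon
    push_neg at hcon
    exact absurd (le_csSup hTbdd hcon) (not_le.mpr hr)
  -- quadratic data for each vertical line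
  have hquad : ∀ r : ℝ, ∃ A B C : ℝ, 0 < A ∧
      (∀ s : ℝ, (‖(a + b ^ m * ((r:ℂ)+(s:ℂ)*I)) * Complex.exp ((m : ℂ) * ((r:ℂ)+(s:ℂ)*I))‖ ^ 2 +
            ‖b * Complex.exp ((r:ℂ)+(s:ℂ)*I)‖ ^ 2 = 1) ↔ A*(s*s)+B*s+C = 0) ∧
      discrim A B C = 4*A*(1 - M r) := by
    intro r
    set E : ℝ := Real.exp (2*m*r) with hEdef
    have hE0 : 0 < E := Real.exp_pos _
    set c : ℂ := a + b^m*(r:ℂ) with hcdef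
    set β : ℝ := (c * (starRingEnd ℂ) (b^m*I)).re with hβdef
    set nc : ℝ := normSq c with hncdef
    refine ⟨E*K, 2*E*β, E*nc + normSq b * Real.exp (2*r) - 1, mul_pos hE0 hK0, ?_, ?_⟩
    · intro s
      have hre1 : ((m:ℂ) * ((r:ℂ)+(s:ℂ)*I)).re = m * r := by
        simp [Complex.mul_re, Complex.add_re, Complex.add_im]
      have hre2 : (((r:ℂ)+(s:ℂ)*I)).re = r := by simp
      have hsplit : a + b^m*((r:ℂ)+(s:ℂ)*I) = c + (s:ℂ)*(b^m*I) := by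
        rw [hcdef]; ring
      have h1 : normSq ((s:ℂ) * (b^m*I)) = (s*s)*K := by
        rw [map_mul, map_mul, Complex.normSq_ofReal, Complex.normSq_I]; ring
      have h2 : (c * (starRingEnd ℂ) ((s:ℂ) * (b^m*I))).re = s*β := by
        rw [map_mul, Complex.conj_ofReal, mul_left_comm, Complex.re_ofReal_mul]
      have hns : normSq (a + b^m*((r:ℂ)+(s:ℂ)*I)) = nc + (s*s)*K + 2*(s*β) := by
        rw [hsplit, Complex.normSq_add, h1, h2]
      have hexpsq : ∀ x : ℝ, Real.exp x ^ 2 = Real.exp (2*x) := by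
        intro x; rw [sq, ← Real.exp_add]; ring_nf
      rw [norm_mul, norm_mul, mul_pow, mul_pow, Complex.norm_exp, Complex.norm_exp,
        hre1, hre2, Complex.sq_norm, Complex.sq_norm, hns, hexpsq, hexpsq,
        show 2*((m:ℝ)*r) = 2*(m:ℝ)*r from by ring]
      constructor
      · intro h; linear_combination h
      · intro h; linear_combination h
    · have hlag : β^2 + (α + K*r)^2 = nc*K := by
        rw [hβdef, hαdef, hncdef, hKdef, hcdef]
        simp only [Complex.normSq_apply, Complex.mul_re, Complex.mul_im, Complex.add_re,
          Complex.add_im, Complex.conj_re, Complex.conj_im, Complex.I_re, Complex.I_im,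
          Complex.ofReal_re, Complex.ofReal_im]
        ring
      rw [discrim, hMdef]
      simp only
      rw [← hEdef]
      have hKK : K * K⁻¹ = 1 := mul_inv_cancel₀ hK0.ne'
      linear_combination (4*E^2) * hlag + (4*E^2*(α+K*r)^2) * hKK
  constructor
  · simp only [Set.mem_setOf_eq, mul_zero, Complex.exp_zero, mul_one, add_zero]
    exact hab
  · refine ⟨t₀, h0t, fun r => ⟨?_, ?_, ?_⟩⟩
    · intro hr
      obtain ⟨A, B, C, hA, hiff, hdisc⟩ := hquad r
      have hMr : M r < 1 := hlt r hr
      have hD : 0 < discrim A B C := by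
        rw [hdisc]
        have h1 : 0 < 1 - M r := by linarith
        positivity
      set sq0 := Real.sqrt (discrim A B C) with hsq0def
      have hss : discrim A B C = sq0 * sq0 := (Real.mul_self_sqrt hD.le).symm
      have hsq0 : 0 < sq0 := Real.sqrt_pos.mpr hD
      have hset : {s : ℝ | ((r : ℂ) + (s : ℂ) * Complex.I) ∈
          {t : ℂ | ‖(a + b ^ m * t) * Complex.exp ((m : ℂ) * t)‖ ^ 2 +
            ‖b * Complex.exp t‖ ^ 2 = 1}}
          = {(-B + sq0)/(2*A), (-B - sq0)/(2*A)} := by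
        ext s
        simp only [Set.mem_setOf_eq, Set.mem_insert_iff, Set.mem_singleton_iff]
        rw [hiff s, quadratic_eq_zero_iff hA.ne' hss s]
      rw [hset, Set.encard_pair]
      intro h
      have h2A : (2*A) ≠ 0 := ne_of_gt (by positivity)
      have h' : (-B + sq0) = (-B - sq0) :=
        mul_right_cancel₀ h2A ((div_eq_div_iff h2A h2A).mp h)
      linarith
    · intro hr
      obtain ⟨A, B, C, hA, hiff, hdisc⟩ := hquad r
      have hMr : M r = 1 := by rw [hr]; exact hMt0
      have hD : discrim A B C = 0 := by rw [hdisc, hMr]; ring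
      have hset : {s : ℝ | ((r : ℂ) + (s : ℂ) * Complex.I) ∈
          {t : ℂ | ‖(a + b ^ m * t) * Complex.exp ((m : ℂ) * t)‖ ^ 2 +
            ‖b * Complex.exp t‖ ^ 2 = 1}}
          = {-B/(2*A)} := by
        ext s
        simp only [Set.mem_setOf_eq, Set.mem_singleton_iff]
        rw [hiff s, quadratic_eq_zero_iff_of_discrim_eq_zero hA.ne' hD s]
      rw [hset, Set.encard_singleton]
    · intro hr
      obtain ⟨A, B, C, hA, hiff, hdisc⟩ := hquad r
      have hMr : 1 < M r := hgt r hr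
      have hD : discrim A B C < 0 := by
        rw [hdisc]
        have h1 : 1 - M r < 0 := by linarith
        nlinarith
      rw [Set.eq_empty_iff_forall_notMem]
      intro s hs
      exact quadratic_ne_zero_of_discrim_ne_sq
        (fun s' => ne_of_lt (lt_of_lt_of_le hD (sq_nonneg s'))) s ((hiff s).mp hs)
end

section
/- Let m ≥ 1 be an integer and let a, b ∈ ℂ with |a|² + |b|² = 1 and b ≠ 0. Then Im(a · (conj b)ᵐ) = 0 if and only if every t ∈ ℂ with t ≠ 0 and |(a + bᵐ·t)·exp(m·t)|² + |b·exp(t)|² = 1 satisfies Re t < 0. (Geometrically: (a,b) is the unique point of maximal distance from {y = 0} on the intersection of its leaf with the unit sphere exactly when Im(a · (conj b)ᵐ) = 0, so the leaves away from {y = 0} are uniquely parametrized by {(a,b) ∈ S³ : Im(a·(conj b)ᵐ) = 0, b ≠ 0}.) -/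
set_option maxHeartbeats 1000000

open Complex

lemma gmono (A B β : ℝ) (hB : B^2 ≤ β^2) (hβ : 0 < β) :
    StrictMono (fun r : ℝ => Real.exp (2*r) * ((A - B*r)^2 + β^2)) := by
  apply strictMono_of_deriv_pos
  intro r
  have hd : HasDerivAt (fun r : ℝ => Real.exp (2*r) * ((A - B*r)^2 + β^2))
      (Real.exp (2*r) * 2 * ((A - B*r)^2 + β^2) +
        Real.exp (2*r) * (2 * (A - B*r) * (0 - B))) r := by
    have h1 : HasDerivAt (fun r : ℝ => Real.exp (2*r)) (Real.exp (2*r) * 2) r := by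
      simpa using ((hasDerivAt_id r).const_mul (2:ℝ)).exp
    have h2 : HasDerivAt (fun r : ℝ => (A - B*r)^2 + β^2) (2 * (A - B*r) * (0 - B)) r := by
      have : HasDerivAt (fun r : ℝ => A - B*r) (0 - B) r := by
        simpa using ((hasDerivAt_id r).const_mul B).const_sub A
      simpa using ((this.pow 2).add_const (β^2))
    exact h1.mul h2
  rw [hd.deriv]
  have he : 0 < Real.exp (2*r) := Real.exp_pos _
  have key : 0 < 2 * ((A - B*r)^2 + β^2) + 2 * (A - B*r) * (0 - B) := by
    nlinarith [sq_nonneg (A - B*r - B), sq_nonneg (A - B*r)]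
  calc (0:ℝ) < Real.exp (2*r) * (2 * ((A - B*r)^2 + β^2) + 2 * (A - B*r) * (0 - B)) :=
        mul_pos he key
    _ = Real.exp (2*r) * 2 * ((A - B*r)^2 + β^2) + Real.exp (2*r) * (2 * (A - B*r) * (0 - B)) := by
        ring


/-- For m ≥ 1 and (a,b) on the unit sphere of ℂ² with b ≠ 0,
Im(a·(conj b)ᵐ) = 0 iff every nonzero parameter t of the intersection of the leaf
through (a,b) with the unit sphere has Re t < 0, i.e. (a,b) is the unique point of
maximal distance from {y = 0} on its leaf. -/
theorem stmt6 (m : ℕ) (hm : 1 ≤ m) (a b : ℂ)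
    (hab : ‖a‖ ^ 2 + ‖b‖ ^ 2 = 1) (hb : b ≠ 0) :
    (a * (starRingEnd ℂ b) ^ m).im = 0 ↔
      ∀ t : ℂ, t ≠ 0 →
        ‖(a + b ^ m * t) * Complex.exp ((m : ℂ) * t)‖ ^ 2 +
            ‖b * Complex.exp t‖ ^ 2 = 1 →
        t.re < 0 := by
  have hβ : 0 < ‖b‖ := norm_pos_iff.mpr hb
  have hβ1 : ‖b‖ ^ 2 ≤ 1 := by nlinarith [sq_nonneg (‖a‖)]
  constructor
  · -- forward
    intro him t ht hsph
    by_contra hr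
    push_neg at hr
    have k1 : Complex.normSq (b ^ m * t) = Complex.normSq b ^ m * Complex.normSq t := by
      rw [map_mul, map_pow]
    have k2 : (a * (starRingEnd ℂ) (b ^ m * t)).re
        = (a * (starRingEnd ℂ b) ^ m).re * t.re := by
      rw [map_mul, map_pow, ← mul_assoc, Complex.mul_re, Complex.conj_re, Complex.conj_im, him]
      ring
    have hre1 : ((m:ℂ) * t).re = (m:ℝ) * t.re := by simp
    rw [norm_mul, norm_mul, mul_pow, mul_pow, Complex.norm_exp, Complex.norm_exp, hre1,
      Complex.sq_norm, Complex.sq_norm, Complex.normSq_add, k1, k2] at hsph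
    -- abbreviations
    have hnsa : Complex.normSq a = ‖a‖ ^ 2 := (Complex.sq_norm a).symm
    have hnsb : Complex.normSq b = ‖b‖ ^ 2 := (Complex.sq_norm b).symm
    rw [hnsa, hnsb] at hsph
    have hρbound : -(‖a‖ * ‖b‖ ^ m) ≤ (a * (starRingEnd ℂ b) ^ m).re := by
      have h1 : |(a * (starRingEnd ℂ b) ^ m).re| ≤ ‖a‖ * ‖b‖ ^ m := by
        have := Complex.abs_re_le_norm (a * (starRingEnd ℂ b) ^ m)
        rwa [norm_mul, norm_pow, Complex.norm_conj] at this
      linarith [(abs_le.mp h1).1]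
    have hnormt : t.re ^ 2 ≤ Complex.normSq t := by
      rw [Complex.normSq_apply]; nlinarith [sq_nonneg t.im]
    -- generalize to real variables
    obtain ⟨A, hA⟩ : ∃ A : ℝ, A = ‖a‖ := ⟨_, rfl⟩
    obtain ⟨β, hβd⟩ : ∃ β : ℝ, β = ‖b‖ := ⟨_, rfl⟩
    obtain ⟨ρ, hρ⟩ : ∃ ρ : ℝ, ρ = (a * (starRingEnd ℂ b) ^ m).re := ⟨_, rfl⟩
    obtain ⟨s, hs⟩ : ∃ s : ℝ, s = Complex.normSq t := ⟨_, rfl⟩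
    obtain ⟨r, hrd⟩ : ∃ r : ℝ, r = t.re := ⟨_, rfl⟩
    rw [← hA] at hsph hab hρbound
    rw [← hβd] at hsph hab hρbound hβ hβ1
    rw [← hρ] at hsph hρbound
    rw [← hs] at hsph hnormt
    rw [← hrd] at hsph hnormt hr
    have htpos : 0 < s := by rw [hs]; exact Complex.normSq_pos.mpr ht
    have hB : (β ^ m) ^ 2 ≤ β ^ 2 := by
      calc (β ^ m) ^ 2 = (β ^ 2) ^ m := by ring
        _ ≤ (β ^ 2) ^ 1 := pow_le_pow_of_le_one (sq_nonneg β) hβ1 hm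
        _ = β ^ 2 := pow_one _
    rcases eq_or_lt_of_le hr with hr0 | hrpos
    · -- r = 0
      rw [← hr0] at hsph
      simp at hsph
      have hBpos : 0 < (β ^ 2) ^ m * s := mul_pos (pow_pos (pow_pos hβ 2) m) htpos
      linarith [hsph, hab, hBpos]
    · -- r > 0
      have hg := gmono A (β ^ m) β hB hβ hrpos
      simp only [mul_zero, sub_zero, Real.exp_zero, one_mul, zero_mul] at hg
      have hexp2 : Real.exp (2*r) = Real.exp r ^ 2 := by
        rw [two_mul, Real.exp_add]; ring
      rw [hexp2, mul_add] at hg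
      -- hg : A^2 + β^2 < exp r ^2 * (A - β^m * r)^2 + exp r ^2 * β^2
      have hm1 : (1:ℝ) ≤ (m:ℝ) := by exact_mod_cast hm
      have hexpm : Real.exp r ^ 2 ≤ Real.exp ((m:ℝ) * r) ^ 2 := by
        have h1 : Real.exp r ≤ Real.exp ((m:ℝ) * r) := by
          apply Real.exp_le_exp.mpr
          have := mul_le_mul_of_nonneg_right hm1 hr
          linarith
        exact pow_le_pow_left₀ (Real.exp_pos r).le h1 2
      have hinner : (A - β ^ m * r) ^ 2 ≤ A ^ 2 + (β ^ 2) ^ m * s + 2 * (ρ * r) := by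
        have h1 : 0 ≤ (ρ + A * β ^ m) * r := mul_nonneg (by linarith) hr
        have h2 : (β ^ 2) ^ m = (β ^ m) ^ 2 := by ring
        rw [h2]
        nlinarith [mul_le_mul_of_nonneg_left hnormt (sq_nonneg (β ^ m))]
      have hmul : Real.exp r ^ 2 * (A - β ^ m * r) ^ 2
          ≤ Real.exp ((m:ℝ) * r) ^ 2 * (A ^ 2 + (β ^ 2) ^ m * s + 2 * (ρ * r)) :=
        mul_le_mul hexpm hinner (sq_nonneg _) (sq_nonneg _)
      -- hsph : (A^2 + (β^2)^m * s + 2*(ρ*r)) * exp(m*r)^2 + β^2 * exp r ^2 = 1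
      linarith [hg, hmul, hsph, hab]
  · -- reverse
    intro H
    by_contra hc
    have hB2 : (0:ℝ) < Complex.normSq b ^ m := pow_pos (Complex.normSq_pos.mpr hb) m
    set c := (a * (starRingEnd ℂ b) ^ m).im with hcdef
    set θ : ℝ := -(2*c) / (Complex.normSq b ^ m) with hθdef
    have hθ : θ ≠ 0 := div_ne_zero (by simpa using hc) (ne_of_gt hB2)
    have ht : ((θ:ℂ) * Complex.I) ≠ 0 :=
      mul_ne_zero (Complex.ofReal_ne_zero.mpr hθ) Complex.I_ne_zero
    have htre : ((θ:ℂ) * Complex.I).re = 0 := by simp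
    have hmtre : ((m:ℂ) * ((θ:ℂ) * Complex.I)).re = 0 := by simp
    have hsph : ‖(a + b ^ m * ((θ:ℂ) * Complex.I)) * Complex.exp ((m : ℂ) * ((θ:ℂ) * Complex.I))‖ ^ 2 +
        ‖b * Complex.exp ((θ:ℂ) * Complex.I)‖ ^ 2 = 1 := by
      rw [norm_mul, norm_mul, mul_pow, mul_pow, Complex.norm_exp, Complex.norm_exp, hmtre, htre,
        Real.exp_zero, one_pow, mul_one, mul_one, Complex.sq_norm, Complex.sq_norm,
        Complex.normSq_add]
      have h1 : Complex.normSq (b ^ m * ((θ:ℂ) * Complex.I))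
          = Complex.normSq b ^ m * θ ^ 2 := by
        rw [map_mul, map_mul, map_pow, Complex.normSq_ofReal, Complex.normSq_I]
        ring
      have h2 : (a * (starRingEnd ℂ) (b ^ m * ((θ:ℂ) * Complex.I))).re = θ * c := by
        have e1 : (starRingEnd ℂ) (b ^ m * ((θ:ℂ) * Complex.I))
            = (starRingEnd ℂ b) ^ m * ((θ:ℂ) * (-Complex.I)) := by
          rw [map_mul, map_mul, map_pow, Complex.conj_ofReal, Complex.conj_I]
        rw [e1]
        have e2 : a * ((starRingEnd ℂ b) ^ m * ((θ:ℂ) * (-Complex.I)))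
            = (θ:ℂ) * (-Complex.I * (a * (starRingEnd ℂ b) ^ m)) := by ring
        rw [e2]
        simp [Complex.mul_re]
        rw [hcdef, Complex.mul_im]
        ring
      rw [h1, h2]
      have hab' : Complex.normSq a + Complex.normSq b = 1 := by
        rw [← Complex.sq_norm, ← Complex.sq_norm]; exact hab
      have hzero : Complex.normSq b ^ m * θ ^ 2 + 2 * (θ * c) = 0 := by
        have e3 : Complex.normSq b ^ m * θ = -(2*c) := by
          rw [hθdef]; field_simp
        calc Complex.normSq b ^ m * θ ^ 2 + 2 * (θ * c)
            = θ * (Complex.normSq b ^ m * θ) + 2 * (θ * c) := by ring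
          _ = θ * (-(2*c)) + 2 * (θ * c) := by rw [e3]
          _ = 0 := by ring
      linarith [hab', hzero]
    have := H _ ht hsph
    rw [htre] at this
    exact lt_irrefl 0 this
end

section
/- Let m ≥ 1 be an integer and let (x,y) ∈ ℂ² with 0 < |x|² + |y|² ≤ 1. Then conj(x)·(m·x + yᵐ) + conj(y)·y ≠ 0. (Geometrically: at every point of every sphere of radius ε with 0 < ε ≤ 1 centered at the origin of ℂ², the holomorphic vector field θ_m = (m·x + yᵐ) ∂/∂x + y ∂/∂y is not tangent to the sphere, i.e. the leaves of the foliation represented by θ_m intersect all these spheres transversally.) -/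
/-- For m ≥ 1 and (x,y) ∈ ℂ² with 0 < |x|² + |y|² ≤ 1 one has
conj(x)·(mx + yᵐ) + conj(y)·y ≠ 0; i.e. the vector field (mx + yᵐ)∂/∂x + y∂/∂y is
nowhere tangent to the spheres of radius ε, 0 < ε ≤ 1, so its leaves intersect all
these spheres transversally. -/
theorem stmt7 (m : ℕ) (hm : 1 ≤ m) (x y : ℂ)
    (h0 : 0 < ‖x‖ ^ 2 + ‖y‖ ^ 2)
    (h1 : ‖x‖ ^ 2 + ‖y‖ ^ 2 ≤ 1) :
    (starRingEnd ℂ x) * ((m : ℂ) * x + y ^ m) + (starRingEnd ℂ y) * y ≠ 0 := by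
  set a := ‖x‖ with ha
  set b := ‖y‖ with hb
  have ha0 : 0 ≤ a := norm_nonneg x
  have hb0 : 0 ≤ b := norm_nonneg y
  have hb1 : b ≤ 1 := by nlinarith
  have hbm : b ^ m ≤ b := pow_le_of_le_one hb0 hb1 (Nat.one_le_iff_ne_zero.mp hm)
  have hre : ((starRingEnd ℂ x) * ((m : ℂ) * x + y ^ m) + (starRingEnd ℂ y) * y).re
      = (m : ℝ) * a ^ 2 + ((starRingEnd ℂ x) * y ^ m).re + b ^ 2 := by
    have h1' : (starRingEnd ℂ x) * ((m : ℂ) * x + y ^ m)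
        = (m : ℂ) * ((starRingEnd ℂ x) * x) + (starRingEnd ℂ x) * y ^ m := by ring
    rw [Complex.add_re, h1', Complex.add_re, Complex.conj_mul', Complex.conj_mul']
    simp [Complex.ofReal_mul, Complex.sq_norm, ← ha, ← hb, ← Complex.ofReal_pow, Complex.ofReal_re]
  have hbound : -(a * b ^ m) ≤ ((starRingEnd ℂ x) * y ^ m).re := by
    have := Complex.abs_re_le_norm ((starRingEnd ℂ x) * y ^ m)
    have habs : ‖(starRingEnd ℂ x) * y ^ m‖ = a * b ^ m := by
      rw [norm_mul, norm_pow, Complex.norm_conj]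
    rw [habs] at this
    linarith [abs_le.mp this |>.1]
  have hm1 : (1 : ℝ) ≤ (m : ℝ) := by exact_mod_cast hm
  have hpos : 0 < ((starRingEnd ℂ x) * ((m : ℂ) * x + y ^ m) + (starRingEnd ℂ y) * y).re := by
    rw [hre]
    nlinarith [sq_nonneg (a - b), mul_nonneg ha0 hb0, sq_nonneg a, sq_nonneg b,
      mul_le_mul_of_nonneg_left hbm ha0]
  intro h
  rw [h] at hpos
  simp at hpos
end

section
/- Let m ≥ 1 be an integer and let a, b ∈ ℂ with |a|² + |b|² = 1. Then the function g : ℝ → ℝ defined by g(t) = |a|² + 2·Re(bᵐ·conj(a))·t + |b|^(2m)·t² + |b|²·exp(2(1−m)·t) − exp(−2m·t) is strictly monotonically increasing on the interval (−∞, 0]. -/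
/-- For m ≥ 1 and (a,b) on the unit sphere of ℂ², the constant term
g(t) = |a|² + 2Re(bᵐ·conj a)·t + |b|^{2m}·t² + |b|²·e^{2(1−m)t} − e^{−2mt}
of the equation (∗) is strictly monotonically increasing on (−∞, 0]. -/
theorem stmt8 (m : ℕ) (hm : 1 ≤ m) (a b : ℂ)
    (hab : ‖a‖ ^ 2 + ‖b‖ ^ 2 = 1) :
    StrictMonoOn (fun t : ℝ =>
        ‖a‖ ^ 2 + 2 * (b ^ m * starRingEnd ℂ a).re * t +
          ‖b‖ ^ (2 * m) * t ^ 2 +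
          ‖b‖ ^ 2 * Real.exp (2 * (1 - (m : ℝ)) * t) -
          Real.exp (-(2 * (m : ℝ)) * t))
      (Set.Iic 0) := by
  set A := ‖a‖ ^ 2 with hA
  set B := 2 * (b ^ m * starRingEnd ℂ a).re with hBdef
  set C := ‖b‖ ^ (2 * m) with hCdef
  set D := ‖b‖ ^ 2 with hDdef
  have ha0 : 0 ≤ ‖a‖ := norm_nonneg a
  have hb0 : 0 ≤ ‖b‖ := norm_nonneg b
  have hb1 : ‖b‖ ≤ 1 := by nlinarith [sq_nonneg (‖a‖)]
  have hm' : (1 : ℝ) ≤ (m : ℝ) := by exact_mod_cast hm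
  have hCle : ‖b‖ ^ (2 * m) ≤ ‖b‖ ^ 2 :=
    pow_le_pow_of_le_one hb0 hb1 (by omega)
  have hC0 : 0 ≤ C := pow_nonneg hb0 _
  have hC1 : C ≤ 1 := by rw [hCdef]; nlinarith [sq_nonneg (‖a‖)]
  have hD0 : 0 ≤ D := pow_nonneg hb0 _
  have hD1 : D ≤ 1 := by nlinarith [sq_nonneg (‖a‖)]
  have hB : -1 ≤ B := by
    have h1 : |(b ^ m * starRingEnd ℂ a).re| ≤ ‖b ^ m * starRingEnd ℂ a‖ :=
      Complex.abs_re_le_norm _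
    have h2 : ‖b ^ m * starRingEnd ℂ a‖ = ‖b‖ ^ m * ‖a‖ := by
      simp [map_mul, map_pow]
    have h4 : (‖b‖ ^ m) ^ 2 = ‖b‖ ^ (2 * m) := by
      rw [← pow_mul, mul_comm]
    have h5 := abs_le.mp h1
    nlinarith [sq_nonneg (‖b‖ ^ m - ‖a‖)]
  apply strictMonoOn_of_deriv_pos (convex_Iic 0)
  · fun_prop
  · intro t ht
    rw [interior_Iic] at ht
    have htneg : t < 0 := ht
    have h0 : HasDerivAt (fun x : ℝ => B * x) B t := by
      simpa using (hasDerivAt_id t).const_mul B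
    have hsq : HasDerivAt (fun x : ℝ => x ^ 2) (2 * t) t := by
      simpa using hasDerivAt_pow 2 t
    have hexp1 : HasDerivAt (fun x : ℝ => Real.exp (2 * (1 - (m : ℝ)) * x))
        (Real.exp (2 * (1 - (m : ℝ)) * t) * (2 * (1 - (m : ℝ)))) t := by
      simpa using (((hasDerivAt_id t).const_mul (2 * (1 - (m : ℝ)))).exp)
    have hexp2 : HasDerivAt (fun x : ℝ => Real.exp (-(2 * (m : ℝ)) * x))
        (Real.exp (-(2 * (m : ℝ)) * t) * (-(2 * (m : ℝ)))) t := by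
      simpa using (((hasDerivAt_id t).const_mul (-(2 * (m : ℝ)))).exp)
    have hD' : HasDerivAt (fun x : ℝ =>
        A + B * x + C * x ^ 2 + D * Real.exp (2 * (1 - (m : ℝ)) * x) -
          Real.exp (-(2 * (m : ℝ)) * x))
        (0 + B + C * (2 * t) + D * (Real.exp (2 * (1 - (m : ℝ)) * t) * (2 * (1 - (m : ℝ)))) -
          Real.exp (-(2 * (m : ℝ)) * t) * (-(2 * (m : ℝ)))) t :=
      ((((hasDerivAt_const t A).add h0).add (hsq.const_mul C)).add
        (hexp1.const_mul D)).sub hexp2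
    rw [hD'.deriv]
    set E1 := Real.exp (2 * (1 - (m : ℝ)) * t) with hE1def
    set E2 := Real.exp (-(2 * (m : ℝ)) * t) with hE2def
    have hE1pos : 0 < E1 := Real.exp_pos _
    have hE1ge : 1 ≤ E1 := by
      apply Real.one_le_exp
      nlinarith
    have hE2ge : E1 * (1 - 2 * t) ≤ E2 := by
      have hsplit : (-(2 * (m : ℝ))) * t = 2 * (1 - (m : ℝ)) * t + (-2 * t) := by ring
      rw [hE2def, hsplit, Real.exp_add, ← hE1def]
      have : 1 - 2 * t ≤ Real.exp (-2 * t) := by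
        have := Real.add_one_le_exp (-2 * t)
        linarith
      nlinarith
    have key1 : 0 ≤ (1 - D) * ((m : ℝ) - 1) * E1 := by
      apply mul_nonneg (mul_nonneg (by linarith) (by linarith)) (le_of_lt hE1pos)
    have key2 : 0 ≤ (1 - C) * (-t) := mul_nonneg (by linarith) (by linarith)
    have key3 : 0 ≤ (m : ℝ) * (E2 - E1 * (1 - 2 * t)) :=
      mul_nonneg (by linarith) (by linarith)
    have key4 : 0 ≤ (E1 - 1) * (1 - 2 * (m : ℝ) * t) := by
      apply mul_nonneg (by linarith)
      nlinarith
    have key5 : 0 ≤ ((m : ℝ) - 1) * (-t) := mul_nonneg (by linarith) (by linarith)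
    nlinarith [hE1pos, hE1ge]
end

section
/- Let λ ∈ ℂ with λ ∉ ℝ, let I ⊆ ℝ be an interval, and let γ = (γ₁, γ₂) : I → ℂ² be a continuously differentiable curve such that for all s ∈ I: |γ₁(s)|² + |γ₂(s)|² = 1, γ₁(s) ≠ 0, γ₂(s) ≠ 0, γ′(s) ≠ 0, and there exists c ∈ ℂ with γ′(s) = c·(λ·γ₁(s), γ₂(s)) (i.e. γ is a regular curve on the unit sphere everywhere tangent to the foliation given by λx ∂/∂x + y ∂/∂y). Then the function s ↦ |γ₁(s)| is strictly monotone on I. (Hence along any leaf of the intersection foliation of F_λ with S³ avoiding the coordinate axes, the absolute value of the x-coordinate strictly increases or strictly decreases, so such a leaf meets each torus T^x_{ε_x} at most once.) -/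
open Complex

lemma normSq_hasDerivAt {f : ℝ → ℂ} {f' : ℂ} {s : ℝ} (hf : HasDerivAt f f' s) :
    HasDerivAt (fun t => Complex.normSq (f t))
      (2 * ((starRingEnd ℂ) (f s) * f').re) s := by
  have hre : HasDerivAt (fun t => (f t).re) f'.re s :=
    (Complex.reCLM.hasFDerivAt.comp_hasDerivAt s hf)
  have him : HasDerivAt (fun t => (f t).im) f'.im s :=
    (Complex.imCLM.hasFDerivAt.comp_hasDerivAt s hf)
  have h : HasDerivAt (fun t => (f t).re * (f t).re + (f t).im * (f t).im) _ s :=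
    ((hre.mul hre).add (him.mul him))
  have : (fun t => Complex.normSq (f t)) = fun t => (f t).re * (f t).re + (f t).im * (f t).im := by
    funext t; simp [Complex.normSq_apply]
  rw [this]
  convert h using 1
  simp [Complex.mul_re, Complex.conj_re, Complex.conj_im]
  ring

lemma key_re (z c l : ℂ) : ((starRingEnd ℂ) z * (c * (l * z))).re = (c * l).re * Complex.normSq z := by
  simp [Complex.mul_re, Complex.mul_im, Complex.normSq_apply, Complex.conj_re, Complex.conj_im]
  ring

/-- For λ ∉ ℝ, a regular C¹ curve γ on the unit sphere of ℂ², avoiding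
the coordinate axes and everywhere tangent to the foliation given by λx ∂/∂x + y ∂/∂y,
has strictly monotone |γ₁|; hence a leaf of the intersection foliation avoiding the
axes meets each torus T^x_{ε_x} at most once. -/
theorem stmt11 (lam : ℂ) (hlam : lam.im ≠ 0) (I : Set ℝ) (hI : I.OrdConnected)
    (γ : ℝ → ℂ × ℂ) (γ' : ℝ → ℂ × ℂ)
    (hderiv : ∀ s ∈ I, HasDerivAt γ (γ' s) s)
    (hcont : ContinuousOn γ' I)
    (hsphere : ∀ s ∈ I, ‖(γ s).1‖ ^ 2 + ‖(γ s).2‖ ^ 2 = 1)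
    (hx : ∀ s ∈ I, (γ s).1 ≠ 0)
    (hy : ∀ s ∈ I, (γ s).2 ≠ 0)
    (hreg : ∀ s ∈ I, γ' s ≠ 0)
    (htang : ∀ s ∈ I, ∃ c : ℂ, γ' s = (c * (lam * (γ s).1), c * (γ s).2)) :
    StrictMonoOn (fun s => ‖(γ s).1‖) I ∨
      StrictAntiOn (fun s => ‖(γ s).1‖) I := by
  -- convexity
  have hconv : Convex ℝ I := hI.convex
  -- trivial case: interior empty ⇒ I subsingleton
  by_cases hne : (interior I).Nonempty
  · -- derivatives of component functions
    have hd1 : ∀ s ∈ I, HasDerivAt (fun t => (γ t).1) (γ' s).1 s := by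
      intro s hs
      exact (ContinuousLinearMap.fst ℝ ℂ ℂ).hasFDerivAt.comp_hasDerivAt s (hderiv s hs)
    have hd2 : ∀ s ∈ I, HasDerivAt (fun t => (γ t).2) (γ' s).2 s := by
      intro s hs
      exact (ContinuousLinearMap.snd ℝ ℂ ℂ).hasFDerivAt.comp_hasDerivAt s (hderiv s hs)
    set F : ℝ → ℝ := fun s => Complex.normSq (γ s).1 with hFdef
    set h : ℝ → ℝ := fun s => 2 * ((starRingEnd ℂ) (γ s).1 * (γ' s).1).re with hhdef
    have hdF : ∀ s ∈ I, HasDerivAt F (h s) s := fun s hs => normSq_hasDerivAt (hd1 s hs)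
    -- continuity of γ on I
    have hγc : ContinuousOn γ I := fun s hs => ((hderiv s hs).continuousAt).continuousWithinAt
    have hhc : ContinuousOn h I := by
      apply ContinuousOn.mul continuousOn_const
      exact Complex.continuous_re.comp_continuousOn
        (((Complex.continuous_conj.comp_continuousOn hγc.fst)).mul hcont.fst)
    -- nonvanishing of h on interior I
    have hnz : ∀ s ∈ interior I, h s ≠ 0 := by
      intro s hsI
      have hs : s ∈ I := interior_subset hsI
      obtain ⟨c, hc⟩ := htang s hs
      have hc1 : (γ' s).1 = c * (lam * (γ s).1) := by rw [hc]
      have hc2 : (γ' s).2 = c * (γ s).2 := by rw [hc]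
      have nx : 0 < Complex.normSq (γ s).1 := Complex.normSq_pos.2 (hx s hs)
      have ny : 0 < Complex.normSq (γ s).2 := Complex.normSq_pos.2 (hy s hs)
      have hval : h s = 2 * ((c * lam).re * Complex.normSq (γ s).1) := by
        rw [hhdef]; simp only [hc1, key_re]
      -- derivative of sum is zero at interior point
      have hG : HasDerivAt (fun t => Complex.normSq (γ t).1 + Complex.normSq (γ t).2)
          (h s + 2 * ((starRingEnd ℂ) (γ s).2 * (γ' s).2).re) s :=
        (hdF s hs).add (normSq_hasDerivAt (hd2 s hs))
      have hone : (fun t => Complex.normSq (γ t).1 + Complex.normSq (γ t).2) =ᶠ[nhds s]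
          (fun _ => (1:ℝ)) := by
        filter_upwards [mem_interior_iff_mem_nhds.1 hsI] with t ht
        have := hsphere t ht
        rw [Complex.sq_norm, Complex.sq_norm] at this
        exact this
      have hzero : h s + 2 * ((starRingEnd ℂ) (γ s).2 * (γ' s).2).re = 0 := by
        have h0 : HasDerivAt (fun _ : ℝ => (1:ℝ)) 0 s := hasDerivAt_const s 1
        have := (hG.congr_of_eventuallyEq hone.symm).unique h0
        exact this
      have hval2 : ((starRingEnd ℂ) (γ s).2 * (γ' s).2).re = c.re * Complex.normSq (γ s).2 := by
        have := key_re (γ s).2 c 1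
        simpa [hc2] using this
      intro hzero'
      -- h s = 0 ⇒ (c*lam).re = 0
      have hcl : (c * lam).re = 0 := by
        rw [hval] at hzero'
        have := mul_eq_zero.1 hzero'
        rcases this with h' | h'
        · norm_num at h'
        · rcases mul_eq_zero.1 h' with h'' | h''
          · exact h''
          · exact absurd h'' (ne_of_gt nx)
      have hcre : c.re = 0 := by
        rw [hzero', hval2] at hzero
        have : c.re * Complex.normSq (γ s).2 = 0 := by linarith
        rcases mul_eq_zero.1 this with h' | h'
        · exact h'
        · exact absurd h' (ne_of_gt ny)
      have hcim : c.im = 0 := by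
        rw [Complex.mul_re, hcre] at hcl
        simp at hcl
        rcases hcl with h' | h'
        · exact h'
        · exact absurd h' hlam
      have hc0 : c = 0 := Complex.ext hcre hcim
      apply hreg s hs
      rw [hc, hc0]
      simp
    -- continuity of F on I
    have hFc : ContinuousOn F I := fun s hs => ((hdF s hs).continuousAt).continuousWithinAt
    -- sign constancy on interior
    obtain ⟨s₀, hs₀⟩ := hne
    have hprec : IsPreconnected (interior I) := hconv.interior.isPreconnected
    have hhci : ContinuousOn h (interior I) := hhc.mono interior_subset
    have hsign : (∀ s ∈ interior I, 0 < h s) ∨ (∀ s ∈ interior I, h s < 0) := by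
      rcases lt_or_gt_of_ne (hnz s₀ hs₀) with h0 | h0
      · right
        intro s hs
        by_contra hpos
        push_neg at hpos
        have hpos' : 0 < h s := lt_of_le_of_ne hpos (Ne.symm (hnz s hs))
        have := hprec.intermediate_value hs₀ hs hhci (Set.mem_Icc.2 ⟨le_of_lt h0, le_of_lt hpos'⟩)
        obtain ⟨t, ht, ht0⟩ := this
        exact hnz t ht ht0
      · left
        intro s hs
        by_contra hpos
        push_neg at hpos
        have hpos' : h s < 0 := lt_of_le_of_ne hpos (hnz s hs)
        have := hprec.intermediate_value hs hs₀ hhci (Set.mem_Icc.2 ⟨le_of_lt hpos', le_of_lt h0⟩)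
        obtain ⟨t, ht, ht0⟩ := this
        exact hnz t ht ht0
    have hderivF : ∀ s ∈ interior I, deriv F s = h s := fun s hs =>
      (hdF s (interior_subset hs)).deriv
    -- transfer strict monotonicity of F to abs
    have habs : ∀ s, ‖(γ s).1‖ = Real.sqrt (F s) := by
      intro s; simp [hFdef, Complex.norm_def]
    rcases hsign with hp | hp
    · left
      have hF : StrictMonoOn F I :=
        strictMonoOn_of_deriv_pos hconv hFc (fun s hs => (hderivF s hs) ▸ hp s hs)
      intro a ha b hb hab
      simp only [habs]
      exact Real.sqrt_lt_sqrt (Complex.normSq_nonneg _) (hF ha hb hab)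
    · right
      have hF : StrictAntiOn F I :=
        strictAntiOn_of_deriv_neg hconv hFc (fun s hs => (hderivF s hs) ▸ hp s hs)
      intro a ha b hb hab
      simp only [habs]
      exact Real.sqrt_lt_sqrt (Complex.normSq_nonneg _) (hF ha hb hab)
  · -- interior empty ⇒ subsingleton
    left
    intro a ha b hb hab
    exfalso
    apply hne
    have : Set.Ioo a b ⊆ I := fun t ht => hI.out ha hb ⟨le_of_lt ht.1, le_of_lt ht.2⟩
    have hopen : Set.Ioo a b ⊆ interior I := isOpen_Ioo.subset_interior_iff.2 this
    exact ⟨(a + b) / 2, hopen ⟨by linarith, by linarith⟩⟩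
end

section
/- Let n ≥ 1 and let λ₁, …, λₙ ∈ ℂ be such that 0 does not belong to the convex hull in ℂ of {λ₁, …, λₙ}. Then the set of resonances of (λ₁,…,λₙ) is finite; that is, the set {(i, m) : i ∈ {1,…,n}, m = (m₁,…,mₙ) ∈ ℕⁿ, λᵢ = ∑ⱼ mⱼ·λⱼ} is a finite set. -/
/-- If 0 is not in the convex hull of {λ₁,…,λₙ} ⊆ ℂ (Poincaré domain),
then there are only finitely many resonances λᵢ = ∑ⱼ mⱼλⱼ with m ∈ ℕⁿ. -/
theorem stmt17 (n : ℕ) (hn : 1 ≤ n) (lam : Fin n → ℂ)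
    (h : (0 : ℂ) ∉ convexHull ℝ (Set.range lam)) :
    {p : Fin n × (Fin n → ℕ) | lam p.1 = ∑ j, (p.2 j : ℂ) * lam j}.Finite := by
  haveI : Nonempty (Fin n) := Fin.pos_iff_nonempty.mp hn
  have hcl : IsClosed (convexHull ℝ (Set.range lam)) :=
    (Set.Finite.isCompact_convexHull ℝ (Set.finite_range lam)).isClosed
  obtain ⟨f, u, hfu, hu0⟩ :=
    geometric_hahn_banach_closed_point (convex_convexHull ℝ _) hcl h
  have hu : u < 0 := by simpa using hu0
  have hflam : ∀ j, f (lam j) < u := fun j =>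
    hfu _ (subset_convexHull ℝ _ ⟨j, rfl⟩)
  set B := Finset.univ.inf' Finset.univ_nonempty (fun j => f (lam j)) with hB
  have hBle : ∀ j, B ≤ f (lam j) := fun j =>
    Finset.inf'_le _ (Finset.mem_univ j)
  set N : ℕ := ⌈B / u⌉₊ with hN
  have key : ∀ p : Fin n × (Fin n → ℕ),
      lam p.1 = ∑ j, (p.2 j : ℂ) * lam j → ∀ j, p.2 j ≤ N := by
    rintro ⟨i, m⟩ hp j
    have hf : f (lam i) = ∑ k, (m k : ℝ) * f (lam k) := by
      rw [hp, map_sum]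
      congr 1; ext k
      rw [show ((m k : ℂ)) * lam k = (m k : ℝ) • lam k by
        rw [Complex.real_smul]; norm_num, map_smul]
      rfl
    have hsum : B ≤ (∑ k, (m k : ℝ)) * u := by
      calc B ≤ f (lam i) := hBle i
        _ = ∑ k, (m k : ℝ) * f (lam k) := hf
        _ ≤ ∑ k, (m k : ℝ) * u := by
            apply Finset.sum_le_sum
            intro k _
            exact mul_le_mul_of_nonneg_left (hflam k).le (Nat.cast_nonneg _)
        _ = (∑ k, (m k : ℝ)) * u := (Finset.sum_mul _ _ _).symm
    have hdiv : (∑ k, (m k : ℝ)) ≤ B / u := by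
      rw [le_div_iff_of_neg hu]; exact hsum
    have hmj : (m j : ℝ) ≤ B / u := by
      refine le_trans ?_ hdiv
      exact Finset.single_le_sum (f := fun k => (m k : ℝ)) (fun k _ => Nat.cast_nonneg (m k)) (Finset.mem_univ j)
    have : (m j : ℝ) ≤ (N : ℝ) := hmj.trans (Nat.le_ceil _)
    exact_mod_cast this
  apply Set.Finite.subset
    ((Set.finite_univ (α := Fin n)).prod
      (Set.Finite.pi (fun _ : Fin n => Set.finite_Iic N)))
  rintro ⟨i, m⟩ hp
  exact ⟨trivial, fun j _ => key ⟨i, m⟩ hp j⟩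
end
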